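/- arXiv:1601.04696 — 6 statements merged into one kernel-verified Lean document; each statement's English description precedes it below -/
import Mathlib

section
/- Let ψ be an entire function with |ψ(z)| ≤ C0·exp(σ|z|^ρ) for all |z| ≥ r0 and |ψ(x) − 1| ≤ C1·x^{−μ} for all real x ≥ r0, where C0, C1, σ, μ, ρ > 0 and r0 ≥ 1. Let n(r) denote the number of zeros of ψ, counted with multiplicity, in the closed disk of radius r centered at 0. Set r1 = max( r0, (2C1)^{1/μ}, (1/(2e))·(ln(2C0)/σ)^{1/ρ} ). Then for every r ≥ r1 one has n(r) ≤ 2σ·(2e)^ρ·r^ρ. -/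
open Metric Set Filter Function Topology


lemma zcb_list_norm_prod (f : ℂ → ℂ) (L : List ℂ) :
    ‖(L.map f).prod‖ = (L.map (fun a => ‖f a‖)).prod := by
  induction L with
  | nil => simp
  | cons a L ih => simp [norm_mul, ih]

lemma zcb_order_ne_top {f : ℂ → ℂ} (hf : Differentiable ℂ f) (hne : ∃ z, f z ≠ 0) (a : ℂ) :
    analyticOrderAt f a ≠ ⊤ := by
  intro h
  rw [analyticOrderAt_eq_top] at h
  obtain ⟨z, hz⟩ := hne
  exact hz ((AnalyticOnNhd.eqOn_zero_of_preconnected_of_eventuallyEq_zero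
    (fun w _ => hf.analyticAt w) isPreconnected_univ (mem_univ a) h) (mem_univ z))

lemma zcb_order_eq_zero_iff {f : ℂ → ℂ} (hf : Differentiable ℂ f) (a : ℂ) :
    analyticOrderAt f a = 0 ↔ f a ≠ 0 := by
  rw [show ((0 : ℕ∞)) = ((0 : ℕ) : ℕ∞) from rfl, (hf.analyticAt a).analyticOrderAt_eq_natCast]
  constructor
  · rintro ⟨g, hg, hga, hfg⟩
    have h2 := hfg.self_of_nhds
    simp only [sub_self, pow_zero, one_smul] at h2
    rw [h2]; exact hga
  · intro h
    exact ⟨f, hf.analyticAt a, h, by filter_upwards with z; simp⟩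

lemma zcb_finite_zeros {f : ℂ → ℂ} (hf : Differentiable ℂ f) (hne : ∃ z, f z ≠ 0)
    {K : Set ℂ} (hK : IsCompact K) : {z | z ∈ K ∧ f z = 0}.Finite := by
  by_contra hinf
  rw [← Set.not_infinite, not_not] at hinf
  obtain ⟨x, hxK, hx⟩ := hinf.exists_accPt_of_subset_isCompact hK (fun z hz => hz.1)
  have hfreq : ∃ᶠ z in 𝓝[≠] x, f z = 0 := by
    have h2 := accPt_iff_frequently.mp hx
    rw [frequently_nhdsWithin_iff]
    exact h2.mono (fun z hz => ⟨hz.2.2, hz.1⟩)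
  obtain ⟨z, hz⟩ := hne
  exact hz ((AnalyticOnNhd.eqOn_zero_of_preconnected_of_frequently_eq_zero
    (fun w _ => hf.analyticAt w) isPreconnected_univ (mem_univ x) hfreq) (mem_univ z))



lemma zcb_order_factor {f g : ℂ → ℂ} (hf : Differentiable ℂ f) (hg : Differentiable ℂ g)
    (a : ℂ) (hfact : ∀ z, f z = (z - a) * g z) (hgne : ∃ z, g z ≠ 0) (b : ℂ) :
    (analyticOrderAt f b).toNat
      = (analyticOrderAt g b).toNat + (if b = a then 1 else 0) := by
  obtain ⟨n, hn⟩ := Option.ne_none_iff_exists.mp (zcb_order_ne_top hg hgne b)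
  obtain ⟨h0, hh0, hh0b, hev⟩ := ((hg.analyticAt b).analyticOrderAt_eq_natCast (n := n)).mp hn.symm
  by_cases hb : b = a
  · subst hb
    have : analyticOrderAt f b = ((n + 1 : ℕ) : ℕ∞) := by
      rw [(hf.analyticAt b).analyticOrderAt_eq_natCast]
      refine ⟨h0, hh0, hh0b, ?_⟩
      filter_upwards [hev] with z hz
      rw [hfact z, hz]
      simp [smul_eq_mul, pow_succ]
      ring
    rw [this, ← hn]
    simp only [if_pos rfl]
    rfl
  · have : analyticOrderAt f b = (n : ℕ∞) := by
      rw [(hf.analyticAt b).analyticOrderAt_eq_natCast]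
      refine ⟨fun z => (z - a) * h0 z, (analyticAt_id.sub analyticAt_const).mul hh0,
        mul_ne_zero (sub_ne_zero.mpr hb) hh0b, ?_⟩
      filter_upwards [hev] with z hz
      rw [hfact z, hz]
      simp [smul_eq_mul]
      ring
    rw [this, ← hn]
    simp [hb]
    rfl



lemma zcb_toNat_ne_zero {f : ℂ → ℂ} (hf : Differentiable ℂ f) (hne : ∃ z, f z ≠ 0)
    {a : ℂ} (ha : f a = 0) : (analyticOrderAt f a).toNat ≠ 0 := by
  intro h
  rcases ENat.toNat_eq_zero.mp h with h0 | htop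
  · exact ((zcb_order_eq_zero_iff hf a).mp h0) ha
  · exact zcb_order_ne_top hf hne a htop

lemma zcb_supp_subset {f : ℂ → ℂ} (hf : Differentiable ℂ f) (s : Set ℂ) :
    s ∩ support (fun z => (analyticOrderAt f z).toNat) ⊆ {z | z ∈ s ∧ f z = 0} := by
  rintro z ⟨hz, hz2⟩
  refine ⟨hz, ?_⟩
  by_contra hfz
  exact hz2 (by simp [ENat.toNat_eq_zero, (zcb_order_eq_zero_iff hf z).mpr hfz])

lemma zcb_key (r : ℝ) : ∀ (N : ℕ) (f : ℂ → ℂ) (hf : Differentiable ℂ f) (_hne : ∃ z, f z ≠ 0),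
    (∑ᶠ z ∈ Metric.closedBall (0:ℂ) r, (analyticOrderAt f z).toNat) = N →
    ∃ (L : List ℂ) (h : ℂ → ℂ), Differentiable ℂ h ∧ L.length = N ∧
      (∀ a ∈ L, a ∈ Metric.closedBall (0:ℂ) r) ∧
      (∀ z ∈ Metric.closedBall (0:ℂ) r, h z ≠ 0) ∧
      ∀ z, f z = (L.map (fun a => z - a)).prod * h z := by
  intro N
  induction N with
  | zero =>
    intro f hf hne hsum
    refine ⟨[], f, hf, rfl, by simp, ?_, by simp⟩
    intro z hz hfz
    -- derive contradiction : the finsum is positive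
    have hfin : (Metric.closedBall (0:ℂ) r ∩
        support (fun w => (analyticOrderAt f w).toNat)).Finite :=
      (zcb_finite_zeros hf hne (isCompact_closedBall _ _)).subset (zcb_supp_subset hf _)
    have heq := finsum_mem_eq_sum (fun w => (analyticOrderAt f w).toNat) hfin
    rw [heq] at hsum
    have hzmem : z ∈ hfin.toFinset := by
      rw [Set.Finite.mem_toFinset]
      exact ⟨hz, zcb_toNat_ne_zero hf hne hfz⟩
    have := Finset.single_le_sum (f := fun w => (analyticOrderAt f w).toNat)
      (fun i _ => Nat.zero_le _) hzmem
    rw [hsum] at this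
    exact zcb_toNat_ne_zero hf hne hfz (Nat.le_zero.mp this)
  | succ N ih =>
    intro f hf hne hsum
    -- find a zero a in the ball
    have hex : ∃ a ∈ Metric.closedBall (0:ℂ) r, (analyticOrderAt f a).toNat ≠ 0 := by
      by_contra hno
      push_neg at hno
      rw [finsum_mem_eq_zero_of_forall_eq_zero hno] at hsum
      exact Nat.succ_ne_zero _ hsum.symm
    obtain ⟨a, ha, hoa⟩ := hex
    have hfa : f a = 0 := by
      by_contra hfz
      exact hoa (by simp [ENat.toNat_eq_zero, (zcb_order_eq_zero_iff hf a).mpr hfz])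
    set g : ℂ → ℂ := dslope f a with hgdef
    have hg : Differentiable ℂ g := by
      rw [← differentiableOn_univ] at hf ⊢
      exact (Complex.differentiableOn_dslope (by simp)).mpr hf
    have hfact : ∀ z, f z = (z - a) * g z := by
      intro z
      have := sub_smul_dslope f a z
      rw [hfa, sub_zero] at this
      rw [← this, smul_eq_mul]
    have hgne : ∃ z, g z ≠ 0 := by
      obtain ⟨z, hz⟩ := hne
      exact ⟨z, fun h0 => hz (by rw [hfact z, h0, mul_zero])⟩
    -- finsum bookkeeping
    have hford := zcb_order_factor hf hg a hfact hgne
    have hffin : (Metric.closedBall (0:ℂ) r ∩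
        support (fun w => (analyticOrderAt f w).toNat)).Finite :=
      (zcb_finite_zeros hf hne (isCompact_closedBall _ _)).subset (zcb_supp_subset hf _)
    have hgfin : (Metric.closedBall (0:ℂ) r ∩
        support (fun w => (analyticOrderAt g w).toNat)).Finite :=
      (zcb_finite_zeros hg hgne (isCompact_closedBall _ _)).subset (zcb_supp_subset hg _)
    set T : Finset ℂ := insert a (hffin.toFinset ∪ hgfin.toFinset) with hT
    have hTsub : ↑T ⊆ Metric.closedBall (0:ℂ) r := by
      intro z hz
      simp only [hT, Finset.coe_insert, Set.mem_insert_iff, Finset.coe_union,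
        Set.mem_union, Set.Finite.coe_toFinset] at hz
      rcases hz with rfl | hz | hz
      · exact ha
      · exact hz.1
      · exact hz.1
    have hfeq := finsum_mem_eq_sum_of_subset (fun w => (analyticOrderAt f w).toNat)
      (t := T) (fun z hz => by
        simp only [hT, Finset.mem_coe, Finset.mem_insert, Finset.mem_union,
          Set.Finite.mem_toFinset]
        exact Or.inr (Or.inl hz)) hTsub
    have hgeq := finsum_mem_eq_sum_of_subset (fun w => (analyticOrderAt g w).toNat)
      (t := T) (fun z hz => by
        simp only [hT, Finset.mem_coe, Finset.mem_insert, Finset.mem_union,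
          Set.Finite.mem_toFinset]
        exact Or.inr (Or.inr hz)) hTsub
    have hsum2 : (∑ᶠ z ∈ Metric.closedBall (0:ℂ) r, (analyticOrderAt g z).toNat) = N := by
      have hstep : ∑ z ∈ T, (analyticOrderAt f z).toNat
          = (∑ z ∈ T, (analyticOrderAt g z).toNat) + 1 := by
        have : ∀ z ∈ T, (analyticOrderAt f z).toNat
            = (analyticOrderAt g z).toNat + (if z = a then 1 else 0) :=
          fun z _ => hford z
        rw [Finset.sum_congr rfl this, Finset.sum_add_distrib,
          Finset.sum_ite_eq' T a (fun _ => 1)]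
        simp [hT]
      rw [hfeq, hstep] at hsum
      rw [hgeq]
      exact Nat.add_right_cancel hsum
    obtain ⟨L, h, hh, hlen, hmem, hnv, hfac⟩ := ih g hg hgne hsum2
    refine ⟨a :: L, h, hh, by simp [hlen], ?_, hnv, ?_⟩
    · intro b hb
      rcases List.mem_cons.mp hb with rfl | hb
      · exact ha
      · exact hmem b hb
    · intro z
      simp only [List.map_cons, List.prod_cons]
      rw [hfact z, hfac z]
      ring


lemma zcb_real_ineq (r E x y : ℝ) (hr : 0 < r) (hE : 2 ≤ E) (hxy : x^2 + y^2 ≤ r^2) :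
    (E * (2*E*r))^2 * ((r - x)^2 + y^2) ≤ ((2*E*r)^2 - x*r)^2 + (y*r)^2 := by
  have hx : -r ≤ x := by nlinarith [sq_nonneg (x + r), sq_nonneg y]
  have h1 : 0 ≤ 8*E^2*r*(E^2-1)*(r+x) := by
    have : (0:ℝ) ≤ E^2 - 1 := by nlinarith
    have h2 : (0:ℝ) ≤ r + x := by linarith
    positivity
  have h2 : 0 ≤ 4*E^4*(r^2-x^2-y^2) := mul_nonneg (by positivity) (by linarith)
  nlinarith [mul_nonneg (sq_nonneg r) h1, mul_nonneg (sq_nonneg r) h2,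
    mul_nonneg (sq_nonneg r) (sq_nonneg x), mul_nonneg (sq_nonneg r) (sq_nonneg y),
    mul_pos hr hr, sq_nonneg (E*r), mul_pos (mul_pos hr hr) (mul_pos hr hr)]

lemma zcb_blaschke (r E : ℝ) (hr : 0 < r) (hE : 2 ≤ E) (a : ℂ) (ha : ‖a‖ ≤ r) :
    E * (2*E*r) * ‖(r:ℂ) - a‖ ≤ ‖(((2*E*r : ℝ)):ℂ)^2 - (starRingEnd ℂ) a * (r:ℂ)‖ := by
  have hE0 : (0:ℝ) < E := by linarith
  have hL0 : 0 ≤ E * (2*E*r) * ‖(r:ℂ) - a‖ := by positivity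
  have hsq : (E * (2*E*r) * ‖(r:ℂ) - a‖)^2 ≤
      ‖(((2*E*r : ℝ)):ℂ)^2 - (starRingEnd ℂ) a * (r:ℂ)‖^2 := by
    have h1 : ‖(r:ℂ) - a‖^2 = (r - a.re)^2 + a.im^2 := by
      rw [Complex.sq_norm]
      simp [Complex.normSq_apply]
      ring
    have h2 : ‖(((2*E*r : ℝ)):ℂ)^2 - (starRingEnd ℂ) a * (r:ℂ)‖^2
        = ((2*E*r)^2 - a.re*r)^2 + (a.im*r)^2 := by
      have hcast : (((2*E*r : ℝ)):ℂ)^2 = ((((2*E*r)^2 : ℝ)) : ℂ) := by push_cast; ring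
      have hre : ((((2*E*r)^2:ℝ):ℂ) - (starRingEnd ℂ) a * (r:ℂ)).re
          = (2*E*r)^2 - a.re*r := by
        simp [Complex.sub_re, Complex.mul_re, -Complex.ofReal_pow, -Complex.ofReal_mul]
      have him : ((((2*E*r)^2:ℝ):ℂ) - (starRingEnd ℂ) a * (r:ℂ)).im = a.im*r := by
        simp [Complex.sub_im, Complex.mul_im, -Complex.ofReal_pow, -Complex.ofReal_mul]
      rw [hcast, Complex.sq_norm, Complex.normSq_apply, hre, him]
      ring
    have h3 : a.re^2 + a.im^2 ≤ r^2 := by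
      have := Complex.sq_norm a
      have h4 : ‖a‖^2 ≤ r^2 := by
        apply pow_le_pow_left₀ (norm_nonneg a) ha
      rw [Complex.sq_norm] at h4
      simpa [Complex.normSq_apply, sq] using h4
    rw [h2, mul_pow, h1]
    exact zcb_real_ineq r E a.re a.im hr hE h3
  calc E * (2*E*r) * ‖(r:ℂ) - a‖
      = Real.sqrt ((E * (2*E*r) * ‖(r:ℂ) - a‖)^2) := (Real.sqrt_sq hL0).symm
    _ ≤ Real.sqrt (‖(((2*E*r : ℝ)):ℂ)^2 - (starRingEnd ℂ) a * (r:ℂ)‖^2) :=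
        Real.sqrt_le_sqrt hsq
    _ = _ := Real.sqrt_sq (norm_nonneg _)

lemma zcb_list_prod_nonneg (u : ℂ → ℝ) (L : List ℂ) (h : ∀ a ∈ L, 0 ≤ u a) :
    0 ≤ (L.map u).prod := by
  induction L with
  | nil => simp
  | cons a L ih =>
    simp only [List.map_cons, List.prod_cons]
    exact mul_nonneg (h a (List.mem_cons_self))
      (ih (fun b hb => h b (List.mem_cons_of_mem a hb)))

lemma zcb_list_prod_le (c : ℝ) (hc : 0 ≤ c) (u v : ℂ → ℝ) (L : List ℂ)
    (h : ∀ a ∈ L, 0 ≤ u a ∧ c * u a ≤ v a) :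
    c ^ L.length * (L.map u).prod ≤ (L.map v).prod := by
  induction L with
  | nil => simp
  | cons a L ih =>
    simp only [List.map_cons, List.prod_cons, List.length_cons]
    have ha := h a (List.mem_cons_self)
    have ihh := ih (fun b hb => h b (List.mem_cons_of_mem a hb))
    have hP : 0 ≤ (L.map u).prod :=
      zcb_list_prod_nonneg u L (fun b hb => (h b (List.mem_cons_of_mem a hb)).1)
    have hcu : 0 ≤ c * u a := mul_nonneg hc ha.1
    calc c ^ (L.length + 1) * (u a * (L.map u).prod)
        = (c * u a) * (c ^ L.length * (L.map u).prod) := by ring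
      _ ≤ v a * (L.map v).prod := by
          apply mul_le_mul ha.2 ihh (by positivity) (le_trans hcu ha.2)

lemma zcb_list_prod_mul (c : ℝ) (w : ℂ → ℝ) (L : List ℂ) :
    (L.map (fun a => c * w a)).prod = c ^ L.length * (L.map w).prod := by
  induction L with
  | nil => simp
  | cons a L ih =>
    simp only [List.map_cons, List.prod_cons, List.length_cons, ih]
    ring



lemma zcb_list_diff (G : ℂ → ℂ → ℂ) (L : List ℂ) (hG : ∀ a ∈ L, Differentiable ℂ (G a)) :
    Differentiable ℂ (fun z => (L.map (fun a => G a z)).prod) := by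
  induction L with
  | nil => simpa using differentiable_const 1
  | cons a L ih =>
    simp only [List.map_cons, List.prod_cons]
    exact (hG a (List.mem_cons_self)).mul
      (ih (fun b hb => hG b (List.mem_cons_of_mem a hb)))

/-- for an entire function `ψ` with `|ψ(z)| ≤ C₀ e^{σ|z|^ρ}` for `|z| ≥ r₀`
and `|ψ(x) - 1| ≤ C₁ x^{-μ}` on the real ray `x ≥ r₀`, the number `n(r)` of zeros of `ψ`
(with multiplicity) in the closed disk of radius `r` satisfies `n(r) ≤ 2σ(2e)^ρ r^ρ`
for all `r ≥ r₁ = max(r₀, (2C₁)^{1/μ}, (1/(2e))·(ln(2C₀)/σ)^{1/ρ})`. -/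
theorem zero_counting_bound
    (C0 C1 σ μ ρ r0 : ℝ) (hC0 : 0 < C0) (hC1 : 0 < C1) (hσ : 0 < σ) (hμ : 0 < μ)
    (hρ : 0 < ρ) (hr0 : 1 ≤ r0) (ψ : ℂ → ℂ) (hψ : Differentiable ℂ ψ)
    (hgrowth : ∀ z : ℂ, r0 ≤ ‖z‖ → ‖ψ z‖ ≤ C0 * Real.exp (σ * ‖z‖ ^ ρ))
    (hray : ∀ x : ℝ, r0 ≤ x → ‖ψ (x : ℂ) - 1‖ ≤ C1 * x ^ (-μ)) :
    ∀ r : ℝ,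
      max (max r0 ((2 * C1) ^ (1 / μ)))
        ((1 / (2 * Real.exp 1)) * (Real.log (2 * C0) / σ) ^ (1 / ρ)) ≤ r →
      ((∑ᶠ z ∈ Metric.closedBall (0 : ℂ) r, (analyticOrderAt ψ z).toNat : ℕ) : ℝ) ≤
        2 * σ * (2 * Real.exp 1) ^ ρ * r ^ ρ := by
  intro r hr
  classical
  set E := Real.exp 1 with hEdef
  have hE2 : (2:ℝ) ≤ E := by
    have := Real.exp_one_gt_d9; rw [hEdef]; linarith
  have hr0r : r0 ≤ r := le_trans (le_trans (le_max_left _ _) (le_max_left _ _)) hr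
  have hC1r : (2*C1) ^ (1/μ) ≤ r := le_trans (le_trans (le_max_right _ _) (le_max_left _ _)) hr
  have hlogr : (1/(2*E)) * (Real.log (2*C0) / σ) ^ (1/ρ) ≤ r := le_trans (le_max_right _ _) hr
  have hr1 : (1:ℝ) ≤ r := le_trans hr0 hr0r
  have hrpos : (0:ℝ) < r := by linarith
  have hEpos : (0:ℝ) < E := by linarith
  -- |ψ r| ≥ 1/2
  have h2C1 : (0:ℝ) < 2*C1 := by linarith
  have hrmu : 2*C1 ≤ r ^ μ := by
    have h1 : ((2*C1) ^ (1/μ)) ^ μ ≤ r ^ μ :=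
      Real.rpow_le_rpow (Real.rpow_nonneg h2C1.le _) hC1r hμ.le
    rwa [← Real.rpow_mul h2C1.le, one_div_mul_cancel hμ.ne', Real.rpow_one] at h1
  have hrmupos : (0:ℝ) < r ^ μ := Real.rpow_pos_of_pos hrpos μ
  have hC1small : C1 * r ^ (-μ) ≤ 1/2 := by
    rw [Real.rpow_neg hrpos.le, inv_eq_one_div, mul_one_div,
      div_le_div_iff₀ hrmupos (by norm_num : (0:ℝ) < 2)]
    linarith
  have hψr : (1:ℝ)/2 ≤ ‖ψ (r:ℂ)‖ := by
    have h1 := hray r hr0r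
    have h2 : ‖(1:ℂ)‖ - ‖ψ (r:ℂ)‖ ≤ ‖(1:ℂ) - ψ (r:ℂ)‖ := norm_sub_norm_le _ _
    rw [norm_sub_rev] at h2
    simp only [norm_one] at h2
    linarith
  have hne : ∃ z, ψ z ≠ 0 := by
    refine ⟨(r:ℂ), fun h0 => ?_⟩
    rw [h0] at hψr
    simp at hψr
    linarith
  obtain ⟨L, h, hh, hlen, hmem, hnv, hfac⟩ := zcb_key r _ ψ hψ hne rfl
  rw [← hlen]
  set N := L.length with hN
  set R := 2 * E * r with hR
  have hRpos : (0:ℝ) < R := by rw [hR]; positivity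
  have hrR : r ≤ R := by nlinarith
  have hr0R : r0 ≤ R := le_trans hr0r hrR
  set F : ℂ → ℂ := fun z =>
    h z * (L.map (fun a => ((R:ℝ):ℂ)^2 - (starRingEnd ℂ) a * z)).prod with hF
  have hFdiff : Differentiable ℂ F := by
    apply hh.mul
    exact zcb_list_diff (fun a z => ((R:ℝ):ℂ)^2 - (starRingEnd ℂ) a * z) L
      (fun a _ => (differentiable_const _).sub ((differentiable_const _).mul differentiable_id))
  have hnormF : ∀ z : ℂ,
      ‖F z‖ = ‖h z‖ * (L.map (fun a => ‖((R:ℝ):ℂ)^2 - (starRingEnd ℂ) a * z‖)).prod := by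
    intro z
    rw [hF]
    simp only [norm_mul]
    rw [zcb_list_norm_prod (fun a => ((R:ℝ):ℂ)^2 - (starRingEnd ℂ) a * z) L]
  have hnormψ : ∀ z : ℂ, ‖ψ z‖ = (L.map (fun a => ‖z - a‖)).prod * ‖h z‖ := by
    intro z
    rw [hfac z, norm_mul, zcb_list_norm_prod (fun a => z - a) L]
  have hub : ∀ z : ℂ, ‖z‖ = R → ‖F z‖ ≤ (C0 * Real.exp (σ * R ^ ρ)) * R ^ N := by
    intro z hz
    have hψz : ‖ψ z‖ ≤ C0 * Real.exp (σ * R ^ ρ) := by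
      have := hgrowth z (by rw [hz]; exact hr0R)
      rwa [hz] at this
    have hfactor : ∀ a ∈ L, ‖((R:ℝ):ℂ)^2 - (starRingEnd ℂ) a * z‖ = R * ‖z - a‖ := by
      intro a _
      have hzz : ((R:ℝ):ℂ)^2 = z * (starRingEnd ℂ) z := by
        rw [Complex.mul_conj, Complex.normSq_eq_norm_sq, hz]
        push_cast; ring
      have hre : ((R:ℝ):ℂ)^2 - (starRingEnd ℂ) a * z = z * (starRingEnd ℂ) (z - a) := by
        rw [hzz, map_sub]; ring
      rw [hre, norm_mul, hz]
      congr 1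
      rw [Complex.norm_conj]
    have hmapeq : (L.map (fun a => ‖((R:ℝ):ℂ)^2 - (starRingEnd ℂ) a * z‖))
        = L.map (fun a => R * ‖z - a‖) := List.map_congr_left hfactor
    rw [hnormF z, hmapeq, zcb_list_prod_mul R (fun a => ‖z - a‖) L]
    have : ‖h z‖ * (R ^ N * (L.map (fun a => ‖z - a‖)).prod) = R ^ N * ‖ψ z‖ := by
      rw [hnormψ z]; ring
    rw [this]
    calc R ^ N * ‖ψ z‖ ≤ R ^ N * (C0 * Real.exp (σ * R ^ ρ)) :=
          mul_le_mul_of_nonneg_left hψz (by positivity)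
      _ = (C0 * Real.exp (σ * R ^ ρ)) * R ^ N := by ring
  have hmax : ‖F (r:ℂ)‖ ≤ (C0 * Real.exp (σ * R ^ ρ)) * R ^ N := by
    apply Complex.norm_le_of_forall_mem_frontier_norm_le
      (Metric.isBounded_ball (x := (0:ℂ)) (r := R)) hFdiff.diffContOnCl
    · intro z hz
      rw [frontier_ball (0:ℂ) hRpos.ne'] at hz
      exact hub z (by simpa [mem_sphere_iff_norm] using hz)
    · rw [closure_ball (0:ℂ) hRpos.ne', mem_closedBall_zero_iff]
      rw [Complex.norm_real, Real.norm_eq_abs, abs_of_nonneg hrpos.le]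
      exact hrR
  have hlow : E ^ N * R ^ N * (1/2) ≤ ‖F (r:ℂ)‖ := by
    have hprod : (E*R) ^ N * (L.map (fun a => ‖(r:ℂ) - a‖)).prod ≤
        (L.map (fun a => ‖((R:ℝ):ℂ)^2 - (starRingEnd ℂ) a * (r:ℂ)‖)).prod := by
      apply zcb_list_prod_le _ (by positivity)
      intro a haL
      refine ⟨norm_nonneg _, ?_⟩
      have hanorm : ‖a‖ ≤ r := by
        simpa [mem_closedBall_zero_iff] using hmem a haL
      have hb := zcb_blaschke r E hrpos hE2 a hanorm
      calc E * R * ‖(r:ℂ) - a‖ = E * (2*E*r) * ‖(r:ℂ) - a‖ := by rw [hR]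
        _ ≤ _ := hb
    have h1 : ‖h (r:ℂ)‖ * ((E*R) ^ N * (L.map (fun a => ‖(r:ℂ) - a‖)).prod)
        ≤ ‖F (r:ℂ)‖ := by
      rw [hnormF (r:ℂ)]
      exact mul_le_mul_of_nonneg_left hprod (norm_nonneg _)
    have h2 : ‖h (r:ℂ)‖ * ((E*R) ^ N * (L.map (fun a => ‖(r:ℂ) - a‖)).prod)
        = (E*R) ^ N * ‖ψ (r:ℂ)‖ := by
      rw [hnormψ (r:ℂ)]; ring
    have h3 : (E*R) ^ N * (1/2) ≤ (E*R) ^ N * ‖ψ (r:ℂ)‖ :=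
      mul_le_mul_of_nonneg_left hψr (by positivity)
    calc E ^ N * R ^ N * (1/2) = (E*R) ^ N * (1/2) := by rw [← mul_pow]
      _ ≤ (E*R) ^ N * ‖ψ (r:ℂ)‖ := h3
      _ = _ := h2.symm
      _ ≤ ‖F (r:ℂ)‖ := h1
  -- combine
  have hRN : (0:ℝ) < R ^ N := pow_pos hRpos N
  have hEN : E ^ N ≤ 2 * C0 * Real.exp (σ * R ^ ρ) := by
    have hc : E ^ N * R ^ N * (1/2) ≤ (C0 * Real.exp (σ * R ^ ρ)) * R ^ N :=
      le_trans hlow hmax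
    have h1 : (E ^ N * (1/2)) * R ^ N ≤ (C0 * Real.exp (σ * R ^ ρ)) * R ^ N := by
      calc (E ^ N * (1/2)) * R ^ N = E ^ N * R ^ N * (1/2) := by ring
        _ ≤ _ := hc
    have h2 := (mul_le_mul_iff_left₀ hRN).mp h1
    linarith
  have hNlog : (N:ℝ) ≤ Real.log (2*C0) + σ * R ^ ρ := by
    have h1 : Real.log (E ^ N) ≤ Real.log (2 * C0 * Real.exp (σ * R ^ ρ)) :=
      Real.log_le_log (by positivity) hEN
    rw [Real.log_pow, hEdef, Real.log_exp] at h1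
    rw [Real.log_mul (by positivity) (Real.exp_ne_zero _), Real.log_exp] at h1
    simpa using h1
  have hRrhopos : (0:ℝ) < R ^ ρ := Real.rpow_pos_of_pos hRpos ρ
  have hlog2C0 : Real.log (2*C0) ≤ σ * R ^ ρ := by
    by_cases hl : Real.log (2*C0) ≤ 0
    · nlinarith
    · push_neg at hl
      set t := Real.log (2*C0) / σ with ht
      have htpos : 0 < t := by rw [ht]; positivity
      have h1 : t ^ (1/ρ) ≤ R := by
        have h2 := mul_le_mul_of_nonneg_left hlogr (by positivity : (0:ℝ) ≤ 2*E)
        have h3 : 2*E*((1/(2*E)) * t ^ (1/ρ)) = t ^ (1/ρ) := by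
          field_simp
        rw [h3] at h2
        rw [hR]
        linarith
      have h4 : (t ^ (1/ρ)) ^ ρ ≤ R ^ ρ :=
        Real.rpow_le_rpow (Real.rpow_nonneg htpos.le _) h1 hρ.le
      rw [← Real.rpow_mul htpos.le, one_div_mul_cancel hρ.ne', Real.rpow_one] at h4
      have h5 : σ * t = Real.log (2*C0) := by
        rw [ht]; field_simp
      nlinarith
  have hRrho : R ^ ρ = (2*E) ^ ρ * r ^ ρ := by
    rw [hR, show 2*E*r = (2*E)*r from rfl]
    exact Real.mul_rpow (by positivity) hrpos.le
  rw [hRrho] at hNlog hlog2C0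
  linarith
end

section
/- Let σ, ρ > 0, r1 ≥ 1, and let (z_n) be a sequence of nonzero complex numbers such that for every r ≥ r1 the number of indices n with |z_n| ≤ r is at most 2σ·(2e)^ρ·r^ρ. Let p be a natural number with p + 1 > ρ, and set C2 = 2σ(p+1)(2e)^ρ/(p+1−ρ). Then for every R ≥ r1, Σ_{n : |z_n| ≥ R} |z_n|^{−(p+1)} ≤ C2·R^{ρ−p−1}. -/
open MeasureTheory Set

/-- if the number of terms of a sequence `(z_n)` of nonzero complex numbers
in the disk `|z| ≤ r` is at most `2σ(2e)^ρ r^ρ` for all `r ≥ r₁`, then for `p + 1 > ρ`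
and `R ≥ r₁` the tail sum `Σ_{|z_n| ≥ R} |z_n|^{-(p+1)}` converges and is at most
`C₂ R^{ρ-p-1}` with `C₂ = 2σ(p+1)(2e)^ρ/(p+1-ρ)`. -/
theorem tail_sum_bound
    (σ ρ : ℝ) (hσ : 0 < σ) (hρ : 0 < ρ) (r1 : ℝ) (hr1 : 1 ≤ r1)
    (z : ℕ → ℂ) (hz : ∀ n, z n ≠ 0)
    (hcount : ∀ r : ℝ, r1 ≤ r → {n : ℕ | ‖z n‖ ≤ r}.Finite ∧
      ({n : ℕ | ‖z n‖ ≤ r}.ncard : ℝ) ≤ 2 * σ * (2 * Real.exp 1) ^ ρ * r ^ ρ)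
    (p : ℕ) (hp : ρ < p + 1) :
    ∀ R : ℝ, r1 ≤ R →
      Summable (fun n : {n : ℕ // R ≤ ‖z n‖} => ‖z (n : ℕ)‖ ^ (-(p + 1 : ℝ))) ∧
      ∑' n : {n : ℕ // R ≤ ‖z n‖}, ‖z (n : ℕ)‖ ^ (-(p + 1 : ℝ)) ≤
        (2 * σ * (p + 1) * (2 * Real.exp 1) ^ ρ / (p + 1 - ρ)) * R ^ (ρ - p - 1) := by
  intro R hR
  set A : ℝ := 2 * σ * (2 * Real.exp 1) ^ ρ with hA
  have hA0 : 0 < A := by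
    have : (0:ℝ) < 2 * Real.exp 1 := by positivity
    positivity
  have hR1 : (1:ℝ) ≤ R := le_trans hr1 hR
  have hR0 : (0:ℝ) < R := lt_of_lt_of_le one_pos hR1
  have hexp : ρ - (p:ℝ) - 2 < -1 := by linarith
  have hden : (0:ℝ) < (p:ℝ) + 1 - ρ := by linarith
  have hnorm : ∀ n : {n : ℕ // R ≤ ‖z n‖}, 0 < ‖z (n:ℕ)‖ :=
    fun n => lt_of_lt_of_le hR0 n.2
  -- key finite-sum bound
  have key : ∀ s : Finset {n : ℕ // R ≤ ‖z n‖},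
      ∑ n ∈ s, ‖z (n:ℕ)‖ ^ (-((p:ℝ) + 1)) ≤
        (2 * σ * (p + 1) * (2 * Real.exp 1) ^ ρ / (p + 1 - ρ)) * R ^ (ρ - p - 1) := by
    intro s
    set c : ℝ := -((p:ℝ) + 2) with hc
    have hclt : c < -1 := by rw [hc]; push_cast; linarith [Nat.cast_nonneg (α := ℝ) p]
    -- each term equals (p+1) * ∫ over Ioi R of an indicator
    have hterm : ∀ n ∈ s, ‖z (n:ℕ)‖ ^ (-((p:ℝ) + 1)) =
        ((p:ℝ) + 1) * ∫ t in Ioi R, (Ioi ‖z (n:ℕ)‖).indicator (fun t => t ^ c) t := by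
      intro n _
      rw [setIntegral_indicator measurableSet_Ioi, Set.Ioi_inter_Ioi,
        sup_eq_right.mpr n.2, integral_Ioi_rpow_of_lt hclt (hnorm n)]
      have hc1 : c + 1 = -((p:ℝ) + 1) := by rw [hc]; ring
      have hpn : ((p:ℝ) + 1) ≠ 0 := by positivity
      rw [hc1, neg_div_neg_eq, ← mul_div_assoc, mul_div_cancel_left₀ _ hpn]
    have hintind : ∀ n : {n : ℕ // R ≤ ‖z n‖},
        IntegrableOn ((Ioi ‖z (n:ℕ)‖).indicator (fun t => t ^ c)) (Ioi R) := by
      intro n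
      rw [IntegrableOn, integrable_indicator_iff measurableSet_Ioi, IntegrableOn,
        Measure.restrict_restrict measurableSet_Ioi,
        inter_eq_left.mpr (Set.Ioi_subset_Ioi n.2)]
      exact integrableOn_Ioi_rpow_of_lt hclt (hnorm n)
    have hg : IntegrableOn (fun t : ℝ => A * t ^ (ρ - (p:ℝ) - 2)) (Ioi R) :=
      (integrableOn_Ioi_rpow_of_lt hexp hR0).const_mul A
    -- pointwise bound on the sum of indicators
    have hptwise : ∀ t ∈ Ioi R,
        (∑ n ∈ s, (Ioi ‖z (n:ℕ)‖).indicator (fun t => t ^ c) t) ≤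
          A * t ^ (ρ - (p:ℝ) - 2) := by
      intro t ht
      rw [mem_Ioi] at ht
      have ht0 : 0 < t := lt_trans hR0 ht
      have htr1 : r1 ≤ t := le_trans hR (le_of_lt ht)
      obtain ⟨hfin, hcard⟩ := hcount t htr1
      have htc0 : 0 < t ^ c := Real.rpow_pos_of_pos ht0 c
      -- the sum equals (number of n ∈ s with ‖z n‖ < t) * t ^ c
      have hsum_eq : (∑ n ∈ s, (Ioi ‖z (n:ℕ)‖).indicator (fun t => t ^ c) t) =
          ((s.filter (fun n : {n : ℕ // R ≤ ‖z n‖} => ‖z n.1‖ < t)).card : ℝ) * t ^ c := by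
        classical
        have heach : ∀ n ∈ s, (Ioi ‖z (n:ℕ)‖).indicator (fun t => t ^ c) t =
            if ‖z n.1‖ < t then t ^ c else 0 := by
          intro n _; simp [Set.indicator_apply, mem_Ioi]
        rw [Finset.sum_congr rfl heach, ← Finset.sum_filter, Finset.sum_const,
          nsmul_eq_mul]
      rw [hsum_eq]
      have hcard_le : ((s.filter (fun n : {n : ℕ // R ≤ ‖z n‖} => ‖z n.1‖ < t)).card : ℝ) ≤
          ({n : ℕ | ‖z n‖ ≤ t}.ncard : ℝ) := by
        have himg : ((s.filter (fun n : {n : ℕ // R ≤ ‖z n‖} => ‖z n.1‖ < t)).image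
            (fun n : {n : ℕ // R ≤ ‖z n‖} => (n:ℕ))).card =
            (s.filter (fun n : {n : ℕ // R ≤ ‖z n‖} => ‖z n.1‖ < t)).card :=
          Finset.card_image_of_injective _ Subtype.val_injective
        have hsub : (((s.filter (fun n : {n : ℕ // R ≤ ‖z n‖} => ‖z n.1‖ < t)).image
            (fun n : {n : ℕ // R ≤ ‖z n‖} => (n:ℕ)) : Finset ℕ) : Set ℕ) ⊆
            {n : ℕ | ‖z n‖ ≤ t} := by
          intro m hm
          simp only [Finset.coe_image, Set.mem_image, Finset.mem_coe,
            Finset.mem_filter] at hm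
          obtain ⟨n, ⟨_, hn⟩, rfl⟩ := hm
          exact le_of_lt hn
        have := Set.ncard_le_ncard hsub hfin
        rw [Set.ncard_coe_finset, himg] at this
        exact_mod_cast this
      calc ((s.filter (fun n : {n : ℕ // R ≤ ‖z n‖} => ‖z n.1‖ < t)).card : ℝ) * t ^ c
          ≤ ({n : ℕ | ‖z n‖ ≤ t}.ncard : ℝ) * t ^ c :=
            mul_le_mul_of_nonneg_right hcard_le (le_of_lt htc0)
        _ ≤ (A * t ^ ρ) * t ^ c :=
            mul_le_mul_of_nonneg_right hcard (le_of_lt htc0)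
        _ = A * t ^ (ρ - (p:ℝ) - 2) := by
            rw [mul_assoc, ← Real.rpow_add ht0]
            congr 1
            rw [hc]; ring_nf
    have hF : IntegrableOn
        (fun t => ∑ n ∈ s, (Ioi ‖z (n:ℕ)‖).indicator (fun t => t ^ c) t) (Ioi R) :=
      integrable_finset_sum s (fun n _ => hintind n)
    calc ∑ n ∈ s, ‖z (n:ℕ)‖ ^ (-((p:ℝ) + 1))
        = ((p:ℝ) + 1) * ∑ n ∈ s,
            ∫ t in Ioi R, (Ioi ‖z (n:ℕ)‖).indicator (fun t => t ^ c) t := by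
          rw [Finset.mul_sum]; exact Finset.sum_congr rfl hterm
      _ = ((p:ℝ) + 1) * ∫ t in Ioi R,
            ∑ n ∈ s, (Ioi ‖z (n:ℕ)‖).indicator (fun t => t ^ c) t := by
          rw [integral_finset_sum s (fun n _ => hintind n)]
      _ ≤ ((p:ℝ) + 1) * ∫ t in Ioi R, A * t ^ (ρ - (p:ℝ) - 2) := by
          apply mul_le_mul_of_nonneg_left _ (by positivity)
          exact setIntegral_mono_on hF hg measurableSet_Ioi hptwise
      _ = (2 * σ * (p + 1) * (2 * Real.exp 1) ^ ρ / (p + 1 - ρ)) * R ^ (ρ - p - 1) := by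
          rw [integral_const_mul, integral_Ioi_rpow_of_lt hexp hR0]
          have h1 : ρ - (p:ℝ) - 2 + 1 = ρ - (p:ℝ) - 1 := by ring
          rw [h1, hA]
          have hne1 : ρ - (p:ℝ) - 1 ≠ 0 := by linarith
          have hne2 : ((p:ℝ) + 1 - ρ) ≠ 0 := ne_of_gt hden
          field_simp
          ring
  have hnonneg : 0 ≤ fun n : {n : ℕ // R ≤ ‖z n‖} => ‖z (n:ℕ)‖ ^ (-((p:ℝ) + 1)) :=
    fun n => Real.rpow_nonneg (norm_nonneg _) _
  have hsummable : Summable (fun n : {n : ℕ // R ≤ ‖z n‖} => ‖z (n:ℕ)‖ ^ (-((p:ℝ) + 1))) :=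
    summable_of_sum_le hnonneg key
  exact ⟨hsummable, Summable.tsum_le_of_sum_le hsummable key⟩
end

section
/- Let σ, ρ, μ > 0, r1 ≥ 1, δ ∈ (0,1), a > 0, and let (z_n) be a sequence of nonzero complex numbers such that for every r ≥ r1 the number of indices n with |z_n| ≤ r is at most 2σ·(2e)^ρ·r^ρ. Let p be a natural number with p ≥ 1, p + 1 > ρ and δ(p+1) − ρ ≥ μ, and set C2 = 2σ(p+1)(2e)^ρ/(p+1−ρ). Suppose R ≥ max( r1, (a(p+1)/p)^{1/δ} ). Then for every z with |z| ≤ a·R^{1−δ}, the sum w(z) = Σ_{n : |z_n| ≥ R} [ Log(1 − z/z_n) + Σ_{k=1}^{p} (z/z_n)^k / k ] converges absolutely and satisfies |w(z)| ≤ C2·a^{p+1}·R^{−μ}. -/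
open MeasureTheory Set

lemma logE_bound (p : ℕ) (hp : 1 ≤ p) (ξ : ℂ) (hξ : ‖ξ‖ ≤ p / (p + 1)) :
    ‖Complex.log (1 - ξ) + ∑ k ∈ Finset.Icc 1 p, ξ ^ k / (k : ℂ)‖ ≤ ‖ξ‖ ^ (p + 1) := by
  have hp1 : (0:ℝ) < p + 1 := by positivity
  have hlt : ‖ξ‖ < 1 := lt_of_le_of_lt hξ (by rw [div_lt_one hp1]; linarith)
  have hS := Complex.hasSum_taylorSeries_neg_log hlt
  have hpart : ∑ k ∈ Finset.range (p + 1), ξ ^ k / (k : ℂ)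
      = ∑ k ∈ Finset.Icc 1 p, ξ ^ k / (k : ℂ) := by
    rw [Finset.range_eq_Ico, Finset.sum_eq_sum_Ico_succ_bot (Nat.succ_pos p),
      Nat.succ_eq_add_one, Finset.Ico_add_one_right_eq_Icc]
    simp
  -- tail has sum
  have htail : HasSum (fun k : ℕ => ξ ^ (k + (p + 1)) / ((k + (p + 1) : ℕ) : ℂ))
      (-Complex.log (1 - ξ) - ∑ k ∈ Finset.range (p + 1), ξ ^ k / (k : ℂ)) := by
    exact (hasSum_nat_add_iff (f := fun n : ℕ => ξ ^ n / (n : ℂ)) (p + 1)).2 (by simpa using hS)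
  have hkey : Complex.log (1 - ξ) + ∑ k ∈ Finset.Icc 1 p, ξ ^ k / (k : ℂ)
      = -(∑' k : ℕ, ξ ^ (k + (p + 1)) / ((k + (p + 1) : ℕ) : ℂ)) := by
    rw [htail.tsum_eq, hpart]; ring
  rw [hkey, norm_neg]
  have hgeom : HasSum (fun k : ℕ => ‖ξ‖ ^ (p + 1) / (p + 1) * ‖ξ‖ ^ k)
      (‖ξ‖ ^ (p + 1) / (p + 1) * (1 - ‖ξ‖)⁻¹) :=
    (hasSum_geometric_of_lt_one (norm_nonneg ξ) hlt).mul_left _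
  have hbd : ‖∑' k : ℕ, ξ ^ (k + (p + 1)) / ((k + (p + 1) : ℕ) : ℂ)‖
      ≤ ‖ξ‖ ^ (p + 1) / (p + 1) * (1 - ‖ξ‖)⁻¹ := by
    refine tsum_of_norm_bounded hgeom fun k => ?_
    rw [norm_div, norm_pow]
    have h1 : (p + 1 : ℝ) ≤ ‖((k + (p + 1) : ℕ) : ℂ)‖ := by
      rw [Complex.norm_natCast]
      exact_mod_cast Nat.le_add_left (p + 1) k
    calc ‖ξ‖ ^ (k + (p + 1)) / ‖((k + (p + 1) : ℕ) : ℂ)‖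
        ≤ ‖ξ‖ ^ (k + (p + 1)) / (p + 1) := by
          apply div_le_div_of_nonneg_left (by positivity) hp1 h1
      _ = ‖ξ‖ ^ (p + 1) / (p + 1) * ‖ξ‖ ^ k := by rw [pow_add]; ring
  refine hbd.trans ?_
  have h2 : (1 - ‖ξ‖)⁻¹ ≤ p + 1 := by
    rw [inv_le_comm₀ (by nlinarith [norm_nonneg ξ]) hp1]
    have h3 : (p:ℝ) / (p+1) = 1 - ((p:ℝ)+1)⁻¹ := by
      rw [inv_eq_one_div]; field_simp; ring
    linarith [hξ.trans_eq h3]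
  calc ‖ξ‖ ^ (p + 1) / (p + 1) * (1 - ‖ξ‖)⁻¹
      ≤ ‖ξ‖ ^ (p + 1) / (p + 1) * (p + 1) := by
        apply mul_le_mul_of_nonneg_left h2 (by positivity)
    _ = ‖ξ‖ ^ (p + 1) := by field_simp

lemma sum_bound (σ ρ : ℝ) (hσ : 0 < σ) (hρ : 0 < ρ)
    (r1 : ℝ) (hr1 : 1 ≤ r1) (z : ℕ → ℂ)
    (hcount : ∀ r : ℝ, r1 ≤ r → {n : ℕ | ‖z n‖ ≤ r}.Finite ∧
      ({n : ℕ | ‖z n‖ ≤ r}.ncard : ℝ) ≤ 2 * σ * (2 * Real.exp 1) ^ ρ * r ^ ρ)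
    (p : ℕ) (hpρ : ρ < p + 1) (R : ℝ) (hRr1 : r1 ≤ R) :
    ∑' n : {n : ℕ // R ≤ ‖z n‖}, ENNReal.ofReal (‖z n.1‖ ^ (-((p : ℝ) + 1))) ≤
      ENNReal.ofReal (2 * σ * ((p : ℝ) + 1) * (2 * Real.exp 1) ^ ρ / ((p : ℝ) + 1 - ρ) *
        R ^ (ρ - ((p : ℝ) + 1))) := by
  have hR0 : (0:ℝ) < R := lt_of_lt_of_le zero_lt_one (hr1.trans hRr1)
  set K : ℝ := 2 * σ * (2 * Real.exp 1) ^ ρ with hKdef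
  have hK : 0 ≤ K := by positivity
  set e : ℝ := -((p : ℝ) + 2) with hedef
  have he : e < -1 := by simp only [hedef]; push_cast; linarith [Nat.cast_nonneg (α := ℝ) p]
  set F : ℝ → ENNReal := fun t => ENNReal.ofReal (t ^ e) with hFdef
  have hFmeas : Measurable F := by fun_prop
  -- step 1: express each term as an integral
  have step1 : ∀ c : ℝ, R ≤ c → ENNReal.ofReal (c ^ (-((p : ℝ) + 1)))
      = ENNReal.ofReal ((p : ℝ) + 1) * ∫⁻ t in Ioi c, F t := by
    intro c hc
    have hc0 : 0 < c := hR0.trans_le hc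
    have hint : IntegrableOn (fun t : ℝ => t ^ e) (Ioi c) := integrableOn_Ioi_rpow_of_lt he hc0
    have hnn : 0 ≤ᵐ[volume.restrict (Ioi c)] fun t : ℝ => t ^ e := by
      filter_upwards [self_mem_ae_restrict (measurableSet_Ioi : MeasurableSet (Ioi c))] with t ht
      exact Real.rpow_nonneg (le_of_lt (hc0.trans ht)) e
    have h1 : ∫⁻ t in Ioi c, F t = ENNReal.ofReal (∫ t in Ioi c, t ^ e) :=
      (ofReal_integral_eq_lintegral_ofReal hint hnn).symm
    have h2 : ∫ t in Ioi c, t ^ e = c ^ (-((p : ℝ) + 1)) / ((p : ℝ) + 1) := by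
      rw [integral_Ioi_rpow_of_lt he hc0]
      have : e + 1 = -((p : ℝ) + 1) := by simp [hedef]; ring
      rw [this, neg_div_neg_eq]
    rw [h1, h2, ← ENNReal.ofReal_mul (by positivity)]
    congr 1
    field_simp
  -- step 2: integrals over Ioi c as integrals over Ioi R of indicators
  have step2 : ∀ c : ℝ, R ≤ c →
      ∫⁻ t in Ioi c, F t = ∫⁻ t in Ioi R, (Ioi c).indicator F t := by
    intro c hc
    rw [lintegral_indicator measurableSet_Ioi, Measure.restrict_restrict measurableSet_Ioi,
      Set.Ioi_inter_Ioi, max_eq_left hc]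
  have hmain : (∑' n : {n : ℕ // R ≤ ‖z n‖}, ENNReal.ofReal (‖z n.1‖ ^ (-((p : ℝ) + 1))))
      = ENNReal.ofReal ((p : ℝ) + 1) *
        ∫⁻ t in Ioi R, ∑' n : {n : ℕ // R ≤ ‖z n‖}, (Ioi ‖z n.1‖).indicator F t := by
    rw [lintegral_tsum (fun n => (hFmeas.indicator measurableSet_Ioi).aemeasurable),
      ← ENNReal.tsum_mul_left]
    exact tsum_congr fun n => by rw [step1 _ n.2, step2 _ n.2]
  rw [hmain]
  -- inner bound
  have hinner : ∀ t ∈ Ioi R,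
      (∑' n : {n : ℕ // R ≤ ‖z n‖}, (Ioi ‖z n.1‖).indicator F t)
        ≤ ENNReal.ofReal (K * t ^ ρ) * F t := by
    intro t ht
    have ht1 : r1 ≤ t := hRr1.trans (le_of_lt ht)
    obtain ⟨hfin, hcard⟩ := hcount t ht1
    have hfin' : ({n : ℕ | ‖z n‖ < t}).Finite := hfin.subset fun n hn => show ‖z n‖ ≤ t from le_of_lt hn
    set A : Set {n : ℕ // R ≤ ‖z n‖} := {n | ‖z n.1‖ < t} with hAdef
    have hAfin : A.Finite := by
      have : A = Subtype.val ⁻¹' {n : ℕ | ‖z n‖ < t} := rfl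
      rw [this]
      exact Set.Finite.preimage (Set.injOn_of_injective Subtype.val_injective) hfin'
    have hterm : ∀ n : {n : ℕ // R ≤ ‖z n‖},
        (Ioi ‖z n.1‖).indicator F t = A.indicator (fun _ => F t) n := by
      intro n
      by_cases h : ‖z n.1‖ < t
      · rw [Set.indicator_of_mem (by exact h), Set.indicator_of_mem (by exact h)]
      · rw [Set.indicator_of_notMem (by exact h), Set.indicator_of_notMem (by exact h)]
    calc (∑' n : {n : ℕ // R ≤ ‖z n‖}, (Ioi ‖z n.1‖).indicator F t)
        = ∑ n ∈ hAfin.toFinset, A.indicator (fun _ => F t) n := by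
          rw [tsum_congr hterm]
          exact tsum_eq_sum fun n hn =>
            Set.indicator_of_notMem (fun h => hn (hAfin.mem_toFinset.2 h)) _
      _ ≤ ∑ _n ∈ hAfin.toFinset, F t :=
          Finset.sum_le_sum fun n _ => Set.indicator_le_self _ _ n
      _ = (hAfin.toFinset.card : ENNReal) * F t := by rw [Finset.sum_const, nsmul_eq_mul]
      _ ≤ ENNReal.ofReal (K * t ^ ρ) * F t := by
          apply mul_le_mul_left
          rw [← ENNReal.ofReal_natCast]
          apply ENNReal.ofReal_le_ofReal
          have hcard2 : (hAfin.toFinset.card : ℝ) ≤ ({n : ℕ | ‖z n‖ ≤ t}.ncard : ℝ) := by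
            have h1 : hAfin.toFinset.card = A.ncard :=
              (Set.ncard_eq_toFinset_card A hAfin).symm
            have h2 : A.ncard = (Subtype.val '' A).ncard :=
              (Set.ncard_image_of_injective A Subtype.val_injective).symm
            have h3 : (Subtype.val '' A).ncard ≤ {n : ℕ | ‖z n‖ ≤ t}.ncard := by
              apply Set.ncard_le_ncard _ hfin
              rintro _ ⟨n, hn, rfl⟩
              exact le_of_lt (show ‖z n.1‖ < t from hn)
            exact_mod_cast (h1 ▸ h2 ▸ h3)
          exact hcard2.trans hcard
  calc ENNReal.ofReal ((p : ℝ) + 1) *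
        ∫⁻ t in Ioi R, ∑' n : {n : ℕ // R ≤ ‖z n‖}, (Ioi ‖z n.1‖).indicator F t
      ≤ ENNReal.ofReal ((p : ℝ) + 1) * ∫⁻ t in Ioi R, ENNReal.ofReal (K * t ^ ρ) * F t := by
        apply mul_le_mul_right
        exact setLIntegral_mono_ae (by fun_prop) (ae_of_all _ hinner)
    _ = ENNReal.ofReal ((p : ℝ) + 1) * ∫⁻ t in Ioi R, ENNReal.ofReal (K * t ^ (ρ + e)) := by
        congr 1
        apply setLIntegral_congr_fun measurableSet_Ioi
        intro t ht
        have ht0 : (0:ℝ) < t := hR0.trans ht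
        simp only [hFdef]
        rw [← ENNReal.ofReal_mul (mul_nonneg hK (Real.rpow_nonneg ht0.le ρ)), mul_assoc,
          ← Real.rpow_add ht0]
    _ ≤ ENNReal.ofReal (2 * σ * ((p : ℝ) + 1) * (2 * Real.exp 1) ^ ρ / ((p : ℝ) + 1 - ρ) *
        R ^ (ρ - ((p : ℝ) + 1))) := by
        have hre : ρ + e < -1 := by simp only [hedef]; linarith
        have hint2 : IntegrableOn (fun t : ℝ => K * t ^ (ρ + e)) (Ioi R) :=
          (integrableOn_Ioi_rpow_of_lt hre hR0).const_mul K
        have hnn2 : 0 ≤ᵐ[volume.restrict (Ioi R)] fun t : ℝ => K * t ^ (ρ + e) := by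
          filter_upwards [self_mem_ae_restrict (measurableSet_Ioi : MeasurableSet (Ioi R))] with t ht
          have := hR0.trans ht
          positivity
        rw [← ofReal_integral_eq_lintegral_ofReal hint2 hnn2, integral_const_mul,
          integral_Ioi_rpow_of_lt hre hR0, ← ENNReal.ofReal_mul (by positivity)]
        apply ENNReal.ofReal_le_ofReal
        have h4 : ρ + e + 1 = ρ - ((p : ℝ) + 1) := by simp [hedef]; ring
        rw [h4]
        have h7 : ρ - ((p:ℝ) + 1) ≠ 0 := by linarith
        have h6 : -R ^ (ρ - ((p:ℝ) + 1)) / (ρ - ((p:ℝ) + 1))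
            = R ^ (ρ - ((p:ℝ) + 1)) / ((p:ℝ) + 1 - ρ) := by
          rw [show ((p:ℝ) + 1 - ρ) = -(ρ - ((p:ℝ) + 1)) by ring, div_neg, neg_div]
        rw [hKdef, h6]
        apply le_of_eq
        field_simp



/-- under the zero-counting hypothesis, for `p ≥ 1`, `p + 1 > ρ`,
`δ(p+1) - ρ ≥ μ` and `R ≥ max(r₁, (a(p+1)/p)^{1/δ})`, the sum of logarithms of the
Weierstrass primary factors `w(z) = Σ_{|z_n| ≥ R} [Log(1 - z/z_n) + Σ_{k=1}^p (z/z_n)^k/k]`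
converges absolutely in the disk `|z| ≤ a·R^{1-δ}` and satisfies `|w(z)| ≤ C₂ a^{p+1} R^{-μ}`. -/
theorem log_sum_bound
    (σ ρ μ : ℝ) (hσ : 0 < σ) (hρ : 0 < ρ) (hμ : 0 < μ)
    (r1 : ℝ) (hr1 : 1 ≤ r1) (δ a : ℝ) (hδ : δ ∈ Set.Ioo (0 : ℝ) 1) (ha : 0 < a)
    (z : ℕ → ℂ) (hz : ∀ n, z n ≠ 0)
    (hcount : ∀ r : ℝ, r1 ≤ r → {n : ℕ | ‖z n‖ ≤ r}.Finite ∧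
      ({n : ℕ | ‖z n‖ ≤ r}.ncard : ℝ) ≤ 2 * σ * (2 * Real.exp 1) ^ ρ * r ^ ρ)
    (p : ℕ) (hp1 : 1 ≤ p) (hpρ : ρ < p + 1) (hpμ : μ ≤ δ * (p + 1) - ρ)
    (R : ℝ) (hR : max r1 ((a * (p + 1) / p) ^ (1 / δ)) ≤ R) :
    ∀ w : ℂ, ‖w‖ ≤ a * R ^ (1 - δ) →
      Summable (fun n : {n : ℕ // R ≤ ‖z n‖} =>
        ‖Complex.log (1 - w / z (n : ℕ)) +
          ∑ k ∈ Finset.Icc 1 p, (w / z (n : ℕ)) ^ k / (k : ℂ)‖) ∧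
      ‖∑' n : {n : ℕ // R ≤ ‖z n‖},
          (Complex.log (1 - w / z (n : ℕ)) +
            ∑ k ∈ Finset.Icc 1 p, (w / z (n : ℕ)) ^ k / (k : ℂ))‖ ≤
        (2 * σ * (p + 1) * (2 * Real.exp 1) ^ ρ / (p + 1 - ρ)) * a ^ (p + 1) * R ^ (-μ) := by
  intro w hw
  obtain ⟨hδ0, hδ1⟩ := hδ
  have hRr1 : r1 ≤ R := le_trans (le_max_left _ _) hR
  have hR1 : (1:ℝ) ≤ R := hr1.trans hRr1
  have hR0 : (0:ℝ) < R := lt_of_lt_of_le zero_lt_one hR1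
  have hp0 : (0:ℝ) < p := by exact_mod_cast hp1
  have hp1' : (0:ℝ) < (p:ℝ) + 1 := by positivity
  -- R^δ ≥ a(p+1)/p
  have hX : a * ((p:ℝ) + 1) / p ≤ R ^ δ := by
    have h1 : (a * ((p:ℝ) + 1) / p) ^ (1/δ) ≤ R := le_trans (le_max_right _ _) hR
    have h2 : (0:ℝ) ≤ a * ((p:ℝ) + 1) / p := by positivity
    calc a * ((p:ℝ) + 1) / p = ((a * ((p:ℝ) + 1) / p) ^ (1/δ)) ^ δ := by
          rw [← Real.rpow_mul h2, one_div_mul_cancel hδ0.ne', Real.rpow_one]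
      _ ≤ R ^ δ := Real.rpow_le_rpow (Real.rpow_nonneg h2 _) h1 hδ0.le
  -- ratio bound
  have hratio : ∀ n : {n : ℕ // R ≤ ‖z n‖}, ‖w / z n.1‖ ≤ (p:ℝ) / ((p:ℝ) + 1) := by
    intro n
    have hzn0 : (0:ℝ) < ‖z n.1‖ := hR0.trans_le n.2
    have hRδ : (0:ℝ) < R ^ δ := Real.rpow_pos_of_pos hR0 δ
    have h1 : ‖w / z n.1‖ ≤ a * R ^ (1 - δ) / R := by
      rw [norm_div]
      exact div_le_div₀ (by positivity) hw hR0 n.2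
    have h2 : a * R ^ (1 - δ) / R = a / R ^ δ := by
      rw [Real.rpow_sub hR0, Real.rpow_one]
      field_simp
    have h3 : a / R ^ δ ≤ (p:ℝ) / ((p:ℝ) + 1) := by
      rw [div_le_div_iff₀ hRδ hp1']
      rw [div_le_iff₀ hp0] at hX
      linarith
    exact h1.trans (h2 ▸ h3)
  set g : {n : ℕ // R ≤ ‖z n‖} → ℝ := fun n => ‖z n.1‖ ^ (-((p:ℝ) + 1)) with hgdef
  have hgnn : ∀ n, 0 ≤ g n := fun n => Real.rpow_nonneg (norm_nonneg _) _
  set C : ℝ := (a * R ^ (1 - δ)) ^ (p + 1) with hCdef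
  have hC0 : 0 ≤ C := by positivity
  -- pointwise bound
  have hfg : ∀ n : {n : ℕ // R ≤ ‖z n‖},
      ‖Complex.log (1 - w / z n.1) + ∑ k ∈ Finset.Icc 1 p, (w / z n.1) ^ k / (k : ℂ)‖
        ≤ C * g n := by
    intro n
    have hzn0 : (0:ℝ) < ‖z n.1‖ := hR0.trans_le n.2
    have h1 := logE_bound p hp1 (w / z n.1) (hratio n)
    have h2 : ‖w / z n.1‖ ^ (p + 1) ≤ (a * R ^ (1 - δ) / ‖z n.1‖) ^ (p + 1) := by
      apply pow_le_pow_left₀ (norm_nonneg _)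
      rw [norm_div]
      gcongr
    have h3 : (a * R ^ (1 - δ) / ‖z n.1‖) ^ (p + 1) = C * g n := by
      rw [div_pow, hCdef, hgdef, div_eq_mul_inv]
      congr 1
      rw [← Real.rpow_natCast ‖z n.1‖ (p + 1), ← Real.rpow_neg hzn0.le]
      norm_num
    exact h1.trans (h2.trans_eq h3)
  -- summability of g and its bound
  have hB := sum_bound σ ρ hσ hρ r1 hr1 z hcount p hpρ R hRr1
  set B : ℝ := 2 * σ * ((p:ℝ) + 1) * (2 * Real.exp 1) ^ ρ / ((p:ℝ) + 1 - ρ) *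
      R ^ (ρ - ((p:ℝ) + 1)) with hBdef
  have hB0 : 0 ≤ B := by
    have : (0:ℝ) < (p:ℝ) + 1 - ρ := by linarith
    positivity
  have hne : (∑' n : {n : ℕ // R ≤ ‖z n‖}, ENNReal.ofReal (g n)) ≠ ⊤ :=
    (lt_of_le_of_lt hB ENNReal.ofReal_lt_top).ne
  have hgsum : Summable g := by
    have h := ENNReal.summable_toReal hne
    exact h.congr fun n => ENNReal.toReal_ofReal (hgnn n)
  have hgle : ∑' n, g n ≤ B := by
    have h1 : ENNReal.ofReal (∑' n, g n) = ∑' n, ENNReal.ofReal (g n) :=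
      ENNReal.ofReal_tsum_of_nonneg hgnn hgsum
    exact (ENNReal.ofReal_le_ofReal_iff hB0).1 (h1 ▸ hB)
  have hfsum : Summable (fun n : {n : ℕ // R ≤ ‖z n‖} =>
      ‖Complex.log (1 - w / z n.1) + ∑ k ∈ Finset.Icc 1 p, (w / z n.1) ^ k / (k : ℂ)‖) :=
    Summable.of_nonneg_of_le (fun n => norm_nonneg _) hfg (hgsum.mul_left C)
  refine ⟨hfsum, ?_⟩
  have hnorm : ‖∑' n : {n : ℕ // R ≤ ‖z n‖},
      (Complex.log (1 - w / z n.1) + ∑ k ∈ Finset.Icc 1 p, (w / z n.1) ^ k / (k : ℂ))‖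
      ≤ C * B := by
    calc ‖∑' n : {n : ℕ // R ≤ ‖z n‖},
        (Complex.log (1 - w / z n.1) + ∑ k ∈ Finset.Icc 1 p, (w / z n.1) ^ k / (k : ℂ))‖
        ≤ ∑' n : {n : ℕ // R ≤ ‖z n‖},
          ‖Complex.log (1 - w / z n.1) + ∑ k ∈ Finset.Icc 1 p, (w / z n.1) ^ k / (k : ℂ)‖ :=
          norm_tsum_le_tsum_norm hfsum
      _ ≤ ∑' n, C * g n := Summable.tsum_le_tsum hfg hfsum (hgsum.mul_left C)
      _ = C * ∑' n, g n := tsum_mul_left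
      _ ≤ C * B := mul_le_mul_of_nonneg_left hgle hC0
  refine hnorm.trans ?_
  -- final arithmetic
  have hCB : C * B = (2 * σ * ((p:ℝ) + 1) * (2 * Real.exp 1) ^ ρ / ((p:ℝ) + 1 - ρ)) *
      a ^ (p + 1) * (R ^ ((1 - δ) * ((p:ℝ) + 1)) * R ^ (ρ - ((p:ℝ) + 1))) := by
    rw [hCdef, hBdef, mul_pow, ← Real.rpow_natCast (R ^ (1 - δ)) (p + 1),
      ← Real.rpow_mul hR0.le]
    push_cast
    ring
  rw [hCB]
  have hexp : R ^ ((1 - δ) * ((p:ℝ) + 1)) * R ^ (ρ - ((p:ℝ) + 1)) ≤ R ^ (-μ) := by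
    rw [← Real.rpow_add hR0]
    apply Real.rpow_le_rpow_of_exponent_le hR1
    push_cast at hpμ ⊢
    linarith
  have hconst : (0:ℝ) ≤ (2 * σ * ((p:ℝ) + 1) * (2 * Real.exp 1) ^ ρ / ((p:ℝ) + 1 - ρ)) *
      a ^ (p + 1) := by
    have : (0:ℝ) < (p:ℝ) + 1 - ρ := by linarith
    positivity
  calc _ ≤ (2 * σ * ((p:ℝ) + 1) * (2 * Real.exp 1) ^ ρ / ((p:ℝ) + 1 - ρ)) *
      a ^ (p + 1) * R ^ (-μ) := mul_le_mul_of_nonneg_left hexp hconst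
    _ = _ := by push_cast; ring
end

section
/- Let p ≥ 1 be a natural number, μ > 0, C1 > 0, r > 0, and let g(z) = a_0 + a_1 z + … + a_p z^p be a complex polynomial of degree at most p. Suppose that for every real z in the segment [r, (p+1)r] one has |e^{g(z)} − 1| ≤ C1·z^{−μ}, and set ε = C1·r^{−μ}. Let A_p = A_p(μ) be the Vandermonde cofactor constant. If ε ≤ 1/2 and ε·A_p ≤ 1/4, then for every z in the closed disk |z| ≤ r one has |e^{g(z)} − 1| ≤ 2·ε·A_p. -/
noncomputable section

/-- The `(p+1)×(p+1)` Vandermonde matrix with entries `c_{kj} = k^{j-1}`, `k, j = 1, …, p+1`. -/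
def vmat (p : ℕ) : Matrix (Fin (p + 1)) (Fin (p + 1)) ℝ :=
  fun k j => ((k : ℕ) + 1 : ℝ) ^ (j : ℕ)

/-- Its determinant `W = 1!·2!·…·p!`. -/
def Wdet (p : ℕ) : ℝ := (vmat p).det

/-- The cofactor `W_{kj}` of the entry in (1-based) row `k+1`, column `j+1`. -/
def cofactor (p : ℕ) (k j : Fin (p + 1)) : ℝ :=
  (-1) ^ ((k : ℕ) + (j : ℕ)) * ((vmat p).submatrix k.succAbove j.succAbove).det

/-- The Vandermonde cofactor constant `A_p(μ) = (1/W)·Σ_k Σ_j |W_{kj}|·k^{-μ}`. -/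
def Ap (p : ℕ) (μ : ℝ) : ℝ :=
  (1 / Wdet p) * ∑ k : Fin (p + 1), ∑ j : Fin (p + 1),
    |cofactor p k j| * ((k : ℕ) + 1 : ℝ) ^ (-μ)

lemma vmat_eq (p : ℕ) : vmat p = Matrix.vandermonde (fun k : Fin (p+1) => ((k : ℕ) + 1 : ℝ)) := rfl

lemma Wdet_pos (p : ℕ) : 0 < Wdet p := by
  rw [Wdet, vmat_eq, Matrix.det_vandermonde]
  apply Finset.prod_pos
  intro i _
  apply Finset.prod_pos
  intro j hj
  have : i < j := Finset.mem_Ioi.mp hj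
  have : (i : ℕ) < (j : ℕ) := this
  have : ((i : ℕ) : ℝ) < ((j : ℕ) : ℝ) := by exact_mod_cast this
  linarith

lemma Wdet_eq_sum_cofactor (p : ℕ) : Wdet p = ∑ j : Fin (p+1), cofactor p 0 j := by
  rw [Wdet, Matrix.det_succ_row _ 0]
  apply Finset.sum_congr rfl
  intro j _
  simp [cofactor, vmat]

lemma Ap_ge_one (p : ℕ) (μ : ℝ) : 1 ≤ Ap p μ := by
  have hW := Wdet_pos p
  rw [Ap, one_div, ← div_eq_inv_mul, le_div_iff₀ hW, one_mul]
  have h0 : Wdet p ≤ ∑ j : Fin (p+1), |cofactor p 0 j| * ((0:ℕ) + 1 : ℝ) ^ (-μ) := by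
    simp only [Nat.cast_zero, zero_add, Real.one_rpow, mul_one]
    calc Wdet p = ∑ j : Fin (p+1), cofactor p 0 j := Wdet_eq_sum_cofactor p
      _ ≤ |∑ j : Fin (p+1), cofactor p 0 j| := le_abs_self _
      _ ≤ ∑ j : Fin (p+1), |cofactor p 0 j| := Finset.abs_sum_le_sum_abs _ _
  refine le_trans h0 (Finset.single_le_sum (f := fun k : Fin (p+1) => ∑ j : Fin (p+1), |cofactor p k j| * ((k:ℕ) + 1 : ℝ) ^ (-μ)) ?_ (Finset.mem_univ 0))
  intro k _
  apply Finset.sum_nonneg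
  intro j _
  positivity

/-- A continuous function on an interval with values in `2πiℤ` is constant. -/
lemma Fconst {F : ℝ → ℂ} {u v : ℝ}
    (hFc : ContinuousOn (fun t => (F t).im) (Set.Icc u v))
    (hFint : ∀ x ∈ Set.Icc u v, ∃ n : ℤ, F x = n * (2 * Real.pi * Complex.I)) :
    ∀ x ∈ Set.Icc u v, ∀ y ∈ Set.Icc u v, F x = F y := by
  set S := Set.Icc u v with hS
  have him : ∀ (n : ℤ), ((n : ℂ) * (2 * Real.pi * Complex.I)).im = 2 * Real.pi * n := by
    intro n; simp; ring
  have key : ∀ x ∈ S, ∀ y ∈ S, ∀ nx ny : ℤ, F x = nx * (2 * Real.pi * Complex.I) →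
      F y = ny * (2 * Real.pi * Complex.I) → nx ≤ ny → nx = ny := by
    intro x hx y hy nx ny hFx hFy hle
    by_contra hne
    have hlt : nx < ny := lt_of_le_of_ne hle hne
    have hsub : Set.uIcc x y ⊆ S := Set.ordConnected_Icc.uIcc_subset hx hy
    have hiv := intermediate_value_uIcc (hFc.mono hsub)
    have hpi := Real.pi_pos
    have hmem : (2 * nx + 1) * Real.pi ∈ Set.uIcc ((fun t => (F t).im) x) ((fun t => (F t).im) y) := by
      simp only [hFx, hFy, him]
      rw [Set.uIcc_of_le (by nlinarith [(by exact_mod_cast hle : (nx:ℝ) ≤ ny)])]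
      constructor
      · nlinarith
      · have : (nx : ℝ) + 1 ≤ ny := by exact_mod_cast hlt
        nlinarith
    obtain ⟨w, hw, hweq⟩ := hiv hmem
    obtain ⟨nw, hnw⟩ := hFint w (hsub hw)
    simp only [] at hweq
    rw [hnw, him nw] at hweq
    have h1 : (2:ℝ) * nw = 2 * nx + 1 := by
      have := mul_right_cancel₀ (ne_of_gt hpi) (by linarith [hweq] : (2 * (nw:ℝ)) * Real.pi = (2 * nx + 1) * Real.pi)
      linarith
    have : (2:ℤ) * nw = 2 * nx + 1 := by exact_mod_cast h1
    omega
  intro x hx y hy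
  obtain ⟨nx, hFx⟩ := hFint x hx
  obtain ⟨ny, hFy⟩ := hFint y hy
  have : nx = ny := by
    rcases le_total nx ny with h | h
    · exact key x hx y hy nx ny hFx hFy h
    · exact (key y hy x hx ny nx hFy hFx h).symm
  rw [hFx, hFy, this]


set_option maxHeartbeats 1000000 in
/-- if `|e^{g(z)} - 1| ≤ C₁ z^{-μ}` on the segment `[r, (p+1)r]` for a
polynomial `g` of degree at most `p`, and `ε = C₁ r^{-μ} ≤ 1/2`, `ε·A_p ≤ 1/4`, then
`|e^{g(z)} - 1| ≤ 2·ε·A_p` on the closed disk `|z| ≤ r`. -/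
theorem exp_polynomial_disk_estimate
    (p : ℕ) (hp : 1 ≤ p) (μ C1 r : ℝ) (hμ : 0 < μ) (hC1 : 0 < C1) (hr : 0 < r)
    (a : Fin (p + 1) → ℂ)
    (hseg : ∀ x : ℝ, x ∈ Set.Icc r ((p + 1) * r) →
      ‖Complex.exp (∑ j : Fin (p + 1), a j * (x : ℂ) ^ (j : ℕ)) - 1‖ ≤ C1 * x ^ (-μ))
    (hε : C1 * r ^ (-μ) ≤ 1 / 2) (hεA : C1 * r ^ (-μ) * Ap p μ ≤ 1 / 4) :
    ∀ z : ℂ, ‖z‖ ≤ r →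
      ‖Complex.exp (∑ j : Fin (p + 1), a j * z ^ (j : ℕ)) - 1‖ ≤
        2 * (C1 * r ^ (-μ)) * Ap p μ := by
  intro z hz
  set ε := C1 * r ^ (-μ) with hεdef
  have hεpos : 0 < ε := by positivity
  have hA1 : 1 ≤ Ap p μ := Ap_ge_one p μ
  have hεA0 : 0 < ε * Ap p μ := by nlinarith
  have hε4 : ε ≤ 1/4 := by nlinarith
  set gf : ℝ → ℂ := fun x => ∑ j : Fin (p+1), a j * (x:ℂ) ^ (j:ℕ) with hgf
  have hgfc : Continuous gf := by
    apply continuous_finset_sum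
    intro j _
    exact continuous_const.mul ((Complex.continuous_ofReal).pow _)
  -- smallness on the segment
  have hsmallx : ∀ x ∈ Set.Icc r ((↑p + 1) * r), ‖Complex.exp (gf x) - 1‖ ≤ ε := by
    intro x hx
    refine le_trans (hseg x hx) ?_
    rw [hεdef]
    have : x ^ (-μ) ≤ r ^ (-μ) :=
      Real.rpow_le_rpow_of_nonpos hr hx.1 (by linarith)
    nlinarith
  -- exp(gf x) in slit plane
  have hslit : ∀ x ∈ Set.Icc r ((↑p + 1) * r), Complex.exp (gf x) ∈ Complex.slitPlane := by
    intro x hx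
    have h1 := hsmallx x hx
    have h2 : |(Complex.exp (gf x) - 1).re| ≤ ‖Complex.exp (gf x) - 1‖ := Complex.abs_re_le_norm _
    have h3 : (Complex.exp (gf x) - 1).re = (Complex.exp (gf x)).re - 1 := by simp
    apply Complex.mem_slitPlane_iff.mpr
    left
    rw [h3] at h2
    have := abs_le.mp h2
    linarith [this.1]
  set F : ℝ → ℂ := fun x => gf x - Complex.log (Complex.exp (gf x)) with hF
  have hFint : ∀ x ∈ Set.Icc r ((↑p + 1) * r), ∃ n : ℤ, F x = n * (2 * Real.pi * Complex.I) := by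
    intro x hx
    apply Complex.exp_eq_one_iff.mp
    rw [hF]
    simp only []
    rw [Complex.exp_sub, Complex.exp_log (Complex.exp_ne_zero _)]
    exact div_self (Complex.exp_ne_zero _)
  have hFcont : ContinuousOn (fun t => (F t).im) (Set.Icc r ((↑p + 1) * r)) := by
    apply Complex.continuous_im.comp_continuousOn
    apply ContinuousOn.sub hgfc.continuousOn
    intro x hx
    have h1 : ContinuousAt (fun y : ℝ => Complex.exp (gf y)) x :=
      Complex.continuous_exp.continuousAt.comp hgfc.continuousAt
    exact (ContinuousAt.comp (x := x) (continuousAt_clog (hslit x hx)) h1).continuousWithinAt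
  have hFc := Fconst hFcont hFint
  -- nodes
  set xk : Fin (p+1) → ℝ := fun k => ((k:ℕ) + 1) * r with hxk
  have hxkmem : ∀ k, xk k ∈ Set.Icc r ((↑p + 1) * r) := by
    intro k
    simp only [hxk]
    constructor
    · have h1 : (0:ℝ) ≤ ((k:ℕ):ℝ) := Nat.cast_nonneg _
      nlinarith
    · have : ((k:ℕ):ℝ) ≤ (p:ℝ) := by exact_mod_cast k.is_le
      nlinarith
  set b : Fin (p+1) → ℂ := fun k => Complex.log (Complex.exp (gf (xk k))) with hb
  set c : ℂ := F (xk 0) with hc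
  have hnode : ∀ k, gf (xk k) = b k + c := by
    intro k
    have := hFc (xk k) (hxkmem k) (xk 0) (hxkmem 0)
    rw [hF] at this
    simp only [] at this
    rw [hb, hc]
    linear_combination this
  have hexpc : Complex.exp c = 1 := by
    obtain ⟨n, hn⟩ := hFint (xk 0) (hxkmem 0)
    rw [hc, hn]
    exact Complex.exp_int_mul_two_pi_mul_I n
  -- bound on b
  have hbk : ∀ k : Fin (p+1), ‖b k‖ ≤ 7/6 * (ε * ((k:ℕ) + 1 : ℝ) ^ (-μ)) := by
    intro k
    set u : ℂ := Complex.exp (gf (xk k)) - 1 with hu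
    have hu1 : ‖u‖ ≤ ε * ((k:ℕ) + 1 : ℝ) ^ (-μ) := by
      refine le_trans (hseg (xk k) (hxkmem k)) ?_
      rw [hxk]
      simp only []
      rw [Real.mul_rpow (by positivity) (le_of_lt hr), hεdef]
      ring_nf
      apply le_of_eq
      ring
    have hrpow1 : ((k:ℕ) + 1 : ℝ) ^ (-μ) ≤ 1 :=
      Real.rpow_le_one_of_one_le_of_nonpos (by norm_num) (by linarith)
    have hu2 : ‖u‖ ≤ 1/4 := by nlinarith
    have hblog : b k = Complex.log (1 + u) := by rw [hb, hu]; simp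
    rw [hblog]
    have hlog := Complex.norm_log_one_add_le (lt_of_le_of_lt hu2 (by norm_num))
    have hinv : (1 - ‖u‖)⁻¹ ≤ 4/3 := by
      rw [inv_le_comm₀ (by linarith [norm_nonneg u]) (by norm_num)]
      · linarith
    have hn0 := norm_nonneg u
    nlinarith
  -- matrix setup
  have hWpos := Wdet_pos p
  set M := vmat p with hM
  set N := M⁻¹ with hN
  have hdetU : IsUnit M.det := by
    rw [hM]
    exact (ne_of_gt hWpos).isUnit
  have hMN : M * N = 1 := Matrix.mul_nonsing_inv _ hdetU
  set β : Fin (p+1) → ℂ := fun j => ∑ k, ((N j k : ℝ) : ℂ) * b k with hβ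
  set γ : Fin (p+1) → ℂ := fun j => a j * (r:ℂ) ^ (j:ℕ) with hγ
  set δ : Fin (p+1) → ℂ := fun j => γ j - β j - (if j = 0 then c else 0) with hδ
  have hδ0 : ∀ k : Fin (p+1), ∑ j : Fin (p+1), (((k:ℕ) + 1 : ℂ)) ^ (j:ℕ) * δ j = 0 := by
    intro k
    have e1 : ∑ j : Fin (p+1), (((k:ℕ) + 1 : ℂ)) ^ (j:ℕ) * γ j = b k + c := by
      rw [← hnode k, hgf]
      simp only []
      apply Finset.sum_congr rfl
      intro j _
      simp only [hγ, hxk]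
      rw [show (((((k:ℕ):ℝ) + 1) * r : ℝ) : ℂ) = (((k:ℕ) + 1 : ℂ)) * (r:ℂ) by push_cast; ring]
      rw [mul_pow]
      ring
    have e2 : ∑ j : Fin (p+1), (((k:ℕ) + 1 : ℂ)) ^ (j:ℕ) * β j = b k := by
      rw [hβ]
      simp only [Finset.mul_sum]
      rw [Finset.sum_comm]
      have : ∀ k' : Fin (p+1), ∑ j : Fin (p+1), (((k:ℕ) + 1 : ℂ)) ^ (j:ℕ) * (((N j k' : ℝ):ℂ) * b k')
          = (((1 : Matrix (Fin (p+1)) (Fin (p+1)) ℝ) k k' : ℝ) : ℂ) * b k' := by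
        intro k'
        rw [← hMN]
        have : ((( M * N) k k' : ℝ) : ℂ) = ∑ j : Fin (p+1), (((k:ℕ) + 1 : ℂ)) ^ (j:ℕ) * ((N j k' : ℝ):ℂ) := by
          rw [Matrix.mul_apply]
          push_cast
          apply Finset.sum_congr rfl
          intro j _
          rw [hM]
          simp [vmat]
        rw [this, Finset.sum_mul]
        apply Finset.sum_congr rfl
        intro j _
        ring
      calc ∑ k' : Fin (p+1), ∑ j : Fin (p+1), (((k:ℕ) + 1 : ℂ)) ^ (j:ℕ) * (((N j k' : ℝ):ℂ) * b k')
          = ∑ k' : Fin (p+1), (((1 : Matrix (Fin (p+1)) (Fin (p+1)) ℝ) k k' : ℝ) : ℂ) * b k' :=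
            Finset.sum_congr rfl (fun k' _ => this k')
        _ = b k := by
            rw [Finset.sum_eq_single k]
            · simp
            · intro k' _ hk'
              rw [Matrix.one_apply_ne (Ne.symm hk')]
              simp
            · intro h; exact absurd (Finset.mem_univ k) h
    have e3 : ∑ j : Fin (p+1), (((k:ℕ) + 1 : ℂ)) ^ (j:ℕ) * (if j = 0 then c else 0) = c := by
      rw [Finset.sum_eq_single (0 : Fin (p+1))]
      · simp
      · intro j _ hj; simp [hj]
      · intro h; exact absurd (Finset.mem_univ _) h
    have : ∑ j : Fin (p+1), (((k:ℕ) + 1 : ℂ)) ^ (j:ℕ) * δ j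
        = (∑ j : Fin (p+1), (((k:ℕ) + 1 : ℂ)) ^ (j:ℕ) * γ j) - (∑ j : Fin (p+1), (((k:ℕ) + 1 : ℂ)) ^ (j:ℕ) * β j)
          - ∑ j : Fin (p+1), (((k:ℕ) + 1 : ℂ)) ^ (j:ℕ) * (if j = 0 then c else 0) := by
      rw [← Finset.sum_sub_distrib, ← Finset.sum_sub_distrib]
      apply Finset.sum_congr rfl
      intro j _
      rw [hδ]
      ring
    rw [this, e1, e2, e3]
    ring
  -- conclude δ = 0
  set V : Matrix (Fin (p+1)) (Fin (p+1)) ℂ := fun k j => (((k:ℕ) + 1 : ℂ)) ^ (j:ℕ) with hV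
  have hVM : V = (algebraMap ℝ ℂ).mapMatrix M := by
    ext k j
    rw [hV, hM, RingHom.mapMatrix_apply]
    simp [vmat, Matrix.map_apply]
  have hVdet : IsUnit V.det := by
    rw [hVM, ← RingHom.map_det]
    have : (algebraMap ℝ ℂ) M.det ≠ 0 := by
      simp only [ne_eq, map_eq_zero]
      exact ne_of_gt hWpos
    exact this.isUnit
  have hδzero : δ = 0 := by
    have hmv : V.mulVec δ = 0 := by
      funext k
      simp only [Matrix.mulVec, dotProduct, hV]
      exact hδ0 k
    have := congrArg (V⁻¹.mulVec) hmv
    rwa [Matrix.mulVec_mulVec, Matrix.nonsing_inv_mul _ hVdet, Matrix.one_mulVec,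
      Matrix.mulVec_zero] at this
  have hγβ : ∀ j, γ j = β j + (if j = 0 then c else 0) := by
    intro j
    have := congrFun hδzero j
    rw [hδ] at this
    simp only [Pi.zero_apply] at this
    linear_combination this
  -- final estimate
  set t : ℂ := z / r with ht
  have hrC : (r:ℂ) ≠ 0 := by exact_mod_cast ne_of_gt hr
  have htle : ‖t‖ ≤ 1 := by
    rw [ht, norm_div, Complex.norm_real, Real.norm_eq_abs, abs_of_pos hr]
    exact div_le_one_of_le₀ hz (le_of_lt hr)
  set h : ℂ := ∑ j, β j * t ^ (j:ℕ) with hh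
  have hsplit : ∑ j : Fin (p+1), a j * z ^ (j:ℕ) = h + c := by
    have hzt : z = t * r := by rw [ht]; field_simp
    have : ∑ j : Fin (p+1), a j * z ^ (j:ℕ) = ∑ j, γ j * t ^ (j:ℕ) := by
      apply Finset.sum_congr rfl
      intro j _
      rw [hγ, hzt]
      ring
    rw [this]
    have : ∑ j, γ j * t ^ (j:ℕ) = ∑ j, (β j * t ^ (j:ℕ) + (if j = 0 then c else 0) * t ^ (j:ℕ)) := by
      apply Finset.sum_congr rfl
      intro j _
      rw [hγβ j]
      ring
    rw [this, Finset.sum_add_distrib, ← hh]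
    congr 1
    rw [Finset.sum_eq_single (0 : Fin (p+1))]
    · simp
    · intro j _ hj; simp [hj]
    · intro hc'; exact absurd (Finset.mem_univ _) hc'
  -- bound on h
  have hNabs : ∀ j k, |N j k| = |cofactor p k j| / Wdet p := by
    intro j k
    have hNval : N j k = (Wdet p)⁻¹ * cofactor p k j := by
      rw [hN, Matrix.inv_def, Matrix.smul_apply, Matrix.adjugate_fin_succ_eq_det_submatrix,
        smul_eq_mul, Ring.inverse_eq_inv]
      rw [show M.det = Wdet p from rfl]
      rfl
    rw [hNval, abs_mul, abs_inv, abs_of_pos hWpos, div_eq_inv_mul]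
  have hhb : ‖h‖ ≤ 7/6 * (ε * Ap p μ) := by
    have step1 : ‖h‖ ≤ ∑ j, ‖β j‖ := by
      refine le_trans (norm_sum_le _ _) ?_
      apply Finset.sum_le_sum
      intro j _
      rw [norm_mul, norm_pow]
      calc ‖β j‖ * ‖t‖ ^ (j:ℕ) ≤ ‖β j‖ * 1 := by
            apply mul_le_mul_of_nonneg_left _ (norm_nonneg _)
            exact pow_le_one₀ (norm_nonneg _) htle
        _ = ‖β j‖ := mul_one _
    have step2 : ∀ j, ‖β j‖ ≤ ∑ k, |cofactor p k j| / Wdet p * (7/6 * (ε * ((k:ℕ) + 1 : ℝ) ^ (-μ))) := by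
      intro j
      rw [hβ]
      refine le_trans (norm_sum_le _ _) ?_
      apply Finset.sum_le_sum
      intro k _
      rw [norm_mul, Complex.norm_real, Real.norm_eq_abs, hNabs j k]
      exact mul_le_mul_of_nonneg_left (hbk k) (by positivity)
    calc ‖h‖ ≤ ∑ j, ‖β j‖ := step1
      _ ≤ ∑ j, ∑ k, |cofactor p k j| / Wdet p * (7/6 * (ε * ((k:ℕ) + 1 : ℝ) ^ (-μ))) :=
          Finset.sum_le_sum (fun j _ => step2 j)
      _ = 7/6 * (ε * Ap p μ) := by
          rw [Finset.sum_comm, Ap]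
          simp only [Finset.mul_sum]
          apply Finset.sum_congr rfl
          intro k _
          apply Finset.sum_congr rfl
          intro j _
          ring
    -- end
  have hhle : ‖h‖ ≤ 7/24 := by nlinarith
  have hfinal : ‖Complex.exp h - 1‖ ≤ ‖h‖ + ‖h‖^2 := by
    have := Complex.norm_exp_sub_one_sub_id_le (x := h) (by linarith)
    calc ‖Complex.exp h - 1‖ = ‖(Complex.exp h - 1 - h) + h‖ := by ring_nf
      _ ≤ ‖Complex.exp h - 1 - h‖ + ‖h‖ := norm_add_le _ _
      _ ≤ ‖h‖^2 + ‖h‖ := by linarith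
      _ = ‖h‖ + ‖h‖^2 := by ring
  rw [hsplit, Complex.exp_add, hexpc, mul_one]
  have hn0 := norm_nonneg h
  calc ‖Complex.exp h - 1‖ ≤ ‖h‖ + ‖h‖^2 := hfinal
    _ ≤ 2 * ε * Ap p μ := by nlinarith
end
end

section
/- Let p ≥ 1 be a natural number, μ > 0, r > 0, ε ∈ (0, 1/2], and let g(z) = a_0 + a_1 z + … + a_p z^p be a complex polynomial of degree at most p. Suppose that g(kr) = ζ_k for k = 1, …, p+1, where |ζ_k| ≤ ε(1+ε)·k^{−μ}. Then the coefficients satisfy |a_{j−1}| ≤ ε(1+ε)·r^{−(j−1)}·(1/W)·Σ_{k=1}^{p+1} |W_{kj}|·k^{−μ} for each j = 1, …, p+1, and consequently |g(z)| ≤ ε(1+ε)·A_p for every z in the closed disk |z| ≤ r. -/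
noncomputable section

/-- if a polynomial `g(z) = Σ_{j=0}^p a_j z^j` satisfies `g(kr) = ζ_k` with
`|ζ_k| ≤ ε(1+ε)k^{-μ}` for `k = 1, …, p+1`, then the coefficients satisfy Cramer's-rule
bounds and `|g(z)| ≤ ε(1+ε)·A_p` on the closed disk `|z| ≤ r`. -/
theorem polynomial_coefficient_bound
    (p : ℕ) (hp : 1 ≤ p) (μ r ε : ℝ) (hμ : 0 < μ) (hr : 0 < r)
    (hε : ε ∈ Set.Ioc (0 : ℝ) (1 / 2))
    (a : Fin (p + 1) → ℂ) (ζ : Fin (p + 1) → ℂ)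
    (hval : ∀ k : Fin (p + 1),
      (∑ j : Fin (p + 1), a j * (((((k : ℕ) + 1 : ℝ)) * r : ℝ) : ℂ) ^ (j : ℕ)) = ζ k)
    (hζ : ∀ k : Fin (p + 1), ‖ζ k‖ ≤ ε * (1 + ε) * ((k : ℕ) + 1 : ℝ) ^ (-μ)) :
    (∀ j : Fin (p + 1), ‖a j‖ ≤ ε * (1 + ε) * r ^ (-((j : ℕ) : ℝ)) *
      ((1 / Wdet p) * ∑ k : Fin (p + 1), |cofactor p k j| * ((k : ℕ) + 1 : ℝ) ^ (-μ))) ∧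
    ∀ z : ℂ, ‖z‖ ≤ r →
      ‖∑ j : Fin (p + 1), a j * z ^ (j : ℕ)‖ ≤ ε * (1 + ε) * Ap p μ := by
  have hW : 0 < Wdet p := Wdet_pos p
  set V := vmat p with hV
  set K : Matrix (Fin (p + 1)) (Fin (p + 1)) ℂ :=
    (Complex.ofRealHom : ℝ →+* ℂ).mapMatrix V with hK
  set b : Fin (p + 1) → ℂ := fun j => a j * (r : ℂ) ^ (j : ℕ) with hbdef
  have hmv : K.mulVec b = ζ := by
    funext k
    rw [← hval k]
    simp only [Matrix.mulVec, dotProduct, hK, RingHom.mapMatrix_apply,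
      Matrix.map_apply, hV, vmat, hbdef, Complex.ofRealHom_eq_coe]
    refine Finset.sum_congr rfl fun j _ => ?_
    rw [Complex.ofReal_mul, mul_pow]
    push_cast
    ring
  have hdetK : K.det = ((Wdet p : ℝ) : ℂ) := by
    rw [hK, ← RingHom.map_det, Wdet, hV]
    rfl
  have hadj : ∀ j k : Fin (p + 1),
      (Matrix.adjugate K) j k = ((cofactor p k j : ℝ) : ℂ) := by
    intro j k
    rw [Matrix.adjugate_fin_succ_eq_det_submatrix]
    have hsub : K.submatrix k.succAbove j.succAbove =
        (Complex.ofRealHom : ℝ →+* ℂ).mapMatrix (V.submatrix k.succAbove j.succAbove) := rfl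
    rw [hsub, ← RingHom.map_det, cofactor]
    simp only [Complex.ofRealHom_eq_coe, hV]
    push_cast
    ring
  have key : ∀ j, ((Wdet p : ℝ) : ℂ) * b j =
      ∑ k : Fin (p + 1), ((cofactor p k j : ℝ) : ℂ) * ζ k := by
    intro j
    have h1 : (Matrix.adjugate K).mulVec ζ = K.det • b := by
      rw [← hmv, Matrix.mulVec_mulVec, Matrix.adjugate_mul, Matrix.smul_mulVec,
        Matrix.one_mulVec]
    have h2 := congrFun h1 j
    simp only [Matrix.mulVec, dotProduct, Pi.smul_apply, smul_eq_mul, hdetK] at h2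
    rw [← h2]
    exact Finset.sum_congr rfl fun k _ => by rw [hadj j k]
  have hnb : ∀ j : Fin (p + 1), ‖b j‖ ≤ ε * (1 + ε) *
      ((1 / Wdet p) * ∑ k : Fin (p + 1), |cofactor p k j| * ((k : ℕ) + 1 : ℝ) ^ (-μ)) := by
    intro j
    have h2 : Wdet p * ‖b j‖ ≤
        ∑ k : Fin (p + 1), |cofactor p k j| * (ε * (1 + ε) * ((k : ℕ) + 1 : ℝ) ^ (-μ)) := by
      calc Wdet p * ‖b j‖ = ‖((Wdet p : ℝ) : ℂ) * b j‖ := by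
            simp only [norm_mul, norm_pow, Complex.norm_real, Real.norm_eq_abs, abs_of_pos hr, abs_of_pos hW]
        _ = ‖∑ k : Fin (p + 1), ((cofactor p k j : ℝ) : ℂ) * ζ k‖ := by rw [key j]
        _ ≤ ∑ k : Fin (p + 1), ‖((cofactor p k j : ℝ) : ℂ) * ζ k‖ := norm_sum_le _ _
        _ ≤ ∑ k : Fin (p + 1), |cofactor p k j| * (ε * (1 + ε) * ((k : ℕ) + 1 : ℝ) ^ (-μ)) := by
            refine Finset.sum_le_sum fun k _ => ?_
            rw [norm_mul, Complex.norm_real]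
            exact mul_le_mul_of_nonneg_left (hζ k) (abs_nonneg _)
    have hS : ∑ k : Fin (p + 1), |cofactor p k j| * (ε * (1 + ε) * ((k : ℕ) + 1 : ℝ) ^ (-μ)) =
        ε * (1 + ε) * ∑ k : Fin (p + 1), |cofactor p k j| * ((k : ℕ) + 1 : ℝ) ^ (-μ) := by
      rw [Finset.mul_sum]
      exact Finset.sum_congr rfl fun k _ => by ring
    rw [hS] at h2
    rw [← mul_le_mul_iff_right₀ hW]
    calc Wdet p * ‖b j‖
        ≤ ε * (1 + ε) * ∑ k : Fin (p + 1), |cofactor p k j| * ((k : ℕ) + 1 : ℝ) ^ (-μ) := h2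
      _ = Wdet p * (ε * (1 + ε) *
          ((1 / Wdet p) * ∑ k : Fin (p + 1), |cofactor p k j| * ((k : ℕ) + 1 : ℝ) ^ (-μ))) := by
          field_simp
  have hbr : ∀ j : Fin (p + 1), ‖b j‖ = ‖a j‖ * r ^ (j : ℕ) := by
    intro j
    rw [hbdef]
    simp [norm_pow, abs_of_pos hr]
  constructor
  · intro j
    have hrpow : r ^ (-((j : ℕ) : ℝ)) = (r ^ (j : ℕ))⁻¹ := by
      rw [Real.rpow_neg hr.le, Real.rpow_natCast]
    have har : ‖a j‖ = ‖b j‖ * r ^ (-((j : ℕ) : ℝ)) := by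
      rw [hrpow, hbr j]
      field_simp
    calc ‖a j‖ = ‖b j‖ * r ^ (-((j : ℕ) : ℝ)) := har
      _ ≤ (ε * (1 + ε) *
          ((1 / Wdet p) * ∑ k : Fin (p + 1), |cofactor p k j| * ((k : ℕ) + 1 : ℝ) ^ (-μ))) *
          r ^ (-((j : ℕ) : ℝ)) := by
          exact mul_le_mul_of_nonneg_right (hnb j) (Real.rpow_nonneg hr.le _)
      _ = ε * (1 + ε) * r ^ (-((j : ℕ) : ℝ)) *
          ((1 / Wdet p) * ∑ k : Fin (p + 1), |cofactor p k j| * ((k : ℕ) + 1 : ℝ) ^ (-μ)) := by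
          ring
  · intro z hz
    calc ‖∑ j : Fin (p + 1), a j * z ^ (j : ℕ)‖
        ≤ ∑ j : Fin (p + 1), ‖a j * z ^ (j : ℕ)‖ := norm_sum_le _ _
      _ ≤ ∑ j : Fin (p + 1), ‖b j‖ := by
          refine Finset.sum_le_sum fun j _ => ?_
          rw [norm_mul, norm_pow, hbr j]
          exact mul_le_mul_of_nonneg_left (pow_le_pow_left₀ (norm_nonneg z) hz _) (norm_nonneg _)
      _ ≤ ∑ j : Fin (p + 1), ε * (1 + ε) *
          ((1 / Wdet p) * ∑ k : Fin (p + 1), |cofactor p k j| * ((k : ℕ) + 1 : ℝ) ^ (-μ)) :=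
          Finset.sum_le_sum fun j _ => hnb j
      _ = ε * (1 + ε) * Ap p μ := by
          rw [Ap, Finset.sum_comm]
          simp only [← Finset.mul_sum]
end
end

section
/- Let γ > 1, C > 0, and let K : [0, ∞) → ℂ be a measurable function satisfying |K(t)| ≤ C·exp(−(t/2)^γ) for all t ≥ 0. Then the function ψ(z) = 1 + ∫_0^∞ K(t)·e^{izt} dt is well defined for all z ∈ ℂ, is entire, and has order of growth at most ρ(γ) = γ/(γ−1) and finite type: there exist constants C0 > 0 and σ > 0, depending only on C and γ, such that |ψ(z)| ≤ C0·exp(σ·|z|^{γ/(γ−1)}) for all z ∈ ℂ. -/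
open MeasureTheory

lemma young_aux (γ : ℝ) (hγ : 1 < γ) (a t : ℝ) (ha : 0 ≤ a) (ht : 0 ≤ t) :
    a * t ≤ (1/2) * (t/2) ^ γ + 2 ^ ((γ+1)/(γ-1)) * a ^ (γ/(γ-1)) := by
  have hγ1 : γ - 1 ≠ 0 := by linarith
  have htγ : (0:ℝ) ≤ (t/2) ^ γ := Real.rpow_nonneg (by linarith) _
  have hσnn : (0:ℝ) ≤ 2 ^ ((γ+1)/(γ-1)) * a ^ (γ/(γ-1)) :=
    mul_nonneg (Real.rpow_nonneg (by norm_num) _) (Real.rpow_nonneg ha _)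
  by_cases h : a * t ≤ (1/2) * (t/2) ^ γ
  · linarith
  push_neg at h
  have hat : 0 < a * t := lt_of_le_of_lt (by positivity) h
  have ha' : 0 < a := by
    rcases ha.eq_or_lt with h0 | h0
    · exfalso; rw [← h0] at hat; simp at hat
    · exact h0
  have ht' : 0 < t := by
    rcases ht.eq_or_lt with h0 | h0
    · exfalso; rw [← h0] at hat; simp at hat
    · exact h0
  set u := t / 2 with hu
  have hupos : 0 < u := by positivity
  have key : u ^ (γ - 1) < 4 * a := by
    have h2 : u ^ γ < 4 * a * u := by
      have : (1/2) * u ^ γ < a * (2 * u) := by rw [show a * (2 * u) = a * t from (by rw [hu]; ring)]; exact h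
      nlinarith
    have h3 : u ^ (γ - 1) * u = u ^ γ := by
      rw [← Real.rpow_add_one (ne_of_gt hupos)]; ring_nf
    have := h2; rw [← h3] at this
    exact lt_of_mul_lt_mul_right this hupos.le
  have hub : u < (4 * a) ^ (1/(γ-1)) := by
    have h4 : (u ^ (γ-1)) ^ (1/(γ-1)) < (4*a) ^ (1/(γ-1)) :=
      Real.rpow_lt_rpow (Real.rpow_nonneg hupos.le _) key (div_pos one_pos (by linarith))
    rwa [← Real.rpow_mul hupos.le, mul_one_div, div_self hγ1, Real.rpow_one] at h4
  have hmain : a * t < 2 ^ ((γ+1)/(γ-1)) * a ^ (γ/(γ-1)) := by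
    have h5 : a * t = 2 * a * u := by rw [hu]; ring
    have h6 : 2 * a * u < 2 * a * (4*a) ^ (1/(γ-1)) := by
      apply mul_lt_mul_of_pos_left hub; positivity
    have h7 : 2 * a * (4*a) ^ (1/(γ-1)) = 2 ^ ((γ+1)/(γ-1)) * a ^ (γ/(γ-1)) := by
      rw [Real.mul_rpow (by norm_num) ha]
      have h8 : (4:ℝ) ^ (1/(γ-1)) = 2 ^ (2/(γ-1)) := by
        rw [show (4:ℝ) = 2 ^ (2:ℝ) by norm_num [Real.rpow_natCast 2 2], ← Real.rpow_mul (by norm_num)]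
        ring_nf
      rw [h8]
      have h9 : (2:ℝ) * 2 ^ (2/(γ-1)) = 2 ^ ((γ+1)/(γ-1)) := by
        rw [show ((γ+1)/(γ-1)) = 1 + 2/(γ-1) by field_simp; ring,
          Real.rpow_add (by norm_num), Real.rpow_one]
      have h10 : a * a ^ (1/(γ-1)) = a ^ (γ/(γ-1)) := by
        rw [show (γ/(γ-1)) = 1 + 1/(γ-1) by field_simp; ring,
          Real.rpow_add ha', Real.rpow_one]
      rw [← h9, ← h10]; ring
    rw [h5]; rw [h7] at h6; exact h6
  linarith

lemma exp_bound_aux (γ : ℝ) (hγ : 1 < γ) (a t : ℝ) (ha : 0 ≤ a) (ht : 0 ≤ t) :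
    Real.exp (a*t - (t/2)^γ) ≤
      Real.exp (2 ^ ((γ+1)/(γ-1)) * a ^ (γ/(γ-1))) * Real.exp (-(1/2) * (t/2)^γ) := by
  rw [← Real.exp_add]
  exact Real.exp_le_exp.mpr (by linarith [young_aux γ hγ a t ha ht])

lemma g_integrable_aux (γ : ℝ) (hγ : 1 < γ) :
    IntegrableOn (fun t : ℝ => Real.exp (-(1/2) * (t/2)^γ)) (Set.Ioi 0) := by
  have hb : 0 < (1/2) * ((1:ℝ)/2)^γ := by positivity
  have H := integrableOn_rpow_mul_exp_neg_mul_rpow (p := γ) (show (-1:ℝ) < 0 by norm_num) (by linarith) hb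
  refine H.congr_fun (fun x hx => ?_) measurableSet_Ioi
  dsimp only
  rw [Real.rpow_zero, one_mul]
  congr 1
  have h1 : ((1:ℝ)/2)^γ = 1/(2:ℝ)^γ := by
    rw [Real.div_rpow zero_le_one (by norm_num), Real.one_rpow]
  have h2 : (x/2)^γ = x^γ/(2:ℝ)^γ := Real.div_rpow (le_of_lt hx) (by norm_num : (0:ℝ) ≤ 2) γ
  rw [h1, h2]; ring

lemma norm_F_le_aux (γ C : ℝ) (hγ : 1 < γ) (hC0 : 0 ≤ C) (K : ℝ → ℂ)
    (hKb : ∀ t : ℝ, 0 ≤ t → ‖K t‖ ≤ C * Real.exp (-(t/2)^γ)) (z : ℂ) (t : ℝ) (ht : 0 ≤ t) :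
    ‖K t * Complex.exp (Complex.I * z * t)‖ ≤ C * Real.exp (‖z‖ * t - (t/2)^γ) := by
  rw [norm_mul, Complex.norm_exp]
  have hre : (Complex.I * z * (t:ℂ)).re = -z.im * t := by simp [Complex.mul_re]
  rw [hre]
  have h1 : Real.exp (-z.im * t) ≤ Real.exp (‖z‖ * t) := by
    apply Real.exp_le_exp.mpr
    apply mul_le_mul_of_nonneg_right _ ht
    calc -z.im ≤ |z.im| := neg_le_abs _
      _ ≤ ‖z‖ := Complex.abs_im_le_norm z
  calc ‖K t‖ * Real.exp (-z.im*t)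
      ≤ (C * Real.exp (-(t/2)^γ)) * Real.exp (‖z‖*t) :=
        mul_le_mul (hKb t ht) h1 (Real.exp_pos _).le (by positivity)
    _ = C * Real.exp (‖z‖*t - (t/2)^γ) := by
        rw [mul_assoc, ← Real.exp_add]; ring_nf

/-- for a measurable kernel `K` with `|K(t)| ≤ C·exp(-(t/2)^γ)`, `γ > 1`,
the function `ψ(z) = 1 + ∫_0^∞ K(t)e^{izt} dt` is well defined (the integrand is
integrable for every `z`), entire, and of order at most `γ/(γ-1)` and finite type:
`|ψ(z)| ≤ C₀·exp(σ|z|^{γ/(γ-1)})` for some `C₀, σ > 0` depending only on `C` and `γ`. -/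
theorem jost_function_entire_of_superexponential_kernel
    (γ C : ℝ) (hγ : 1 < γ) (hC : 0 < C) (K : ℝ → ℂ) (hKm : Measurable K)
    (hKb : ∀ t : ℝ, 0 ≤ t → ‖K t‖ ≤ C * Real.exp (-(t / 2) ^ γ)) :
    (∀ z : ℂ, IntegrableOn (fun t : ℝ => K t * Complex.exp (Complex.I * z * t))
      (Set.Ioi 0)) ∧
    Differentiable ℂ (fun z : ℂ =>
      1 + ∫ t in Set.Ioi (0 : ℝ), K t * Complex.exp (Complex.I * z * t)) ∧
    ∃ C0 : ℝ, 0 < C0 ∧ ∃ σ : ℝ, 0 < σ ∧ ∀ z : ℂ,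
      ‖1 + ∫ t in Set.Ioi (0 : ℝ), K t * Complex.exp (Complex.I * z * t)‖ ≤
        C0 * Real.exp (σ * ‖z‖ ^ (γ / (γ - 1))) := by
  set σ : ℝ := 2 ^ ((γ+1)/(γ-1)) with hσdef
  have hσpos : 0 < σ := Real.rpow_pos_of_pos (by norm_num) _
  set g : ℝ → ℝ := fun t => Real.exp (-(1/2) * (t/2)^γ) with hgdef
  have hgint : IntegrableOn g (Set.Ioi 0) := g_integrable_aux γ hγ
  -- measurability of the integrand
  have hFm : ∀ z : ℂ, AEStronglyMeasurable
      (fun t : ℝ => K t * Complex.exp (Complex.I * z * t))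
      (volume.restrict (Set.Ioi 0)) := fun z =>
    (hKm.mul ((Complex.continuous_exp.comp
      (continuous_const.mul Complex.continuous_ofReal)).measurable)).aestronglyMeasurable
  -- key bound
  have hbound : ∀ (a : ℝ), 0 ≤ a → ∀ z : ℂ, ‖z‖ ≤ a → ∀ t : ℝ, 0 ≤ t →
      ‖K t * Complex.exp (Complex.I * z * t)‖ ≤ C * Real.exp (σ * a ^ (γ/(γ-1))) * g t := by
    intro a ha z hz t ht
    calc ‖K t * Complex.exp (Complex.I * z * t)‖
        ≤ C * Real.exp (‖z‖ * t - (t/2)^γ) := norm_F_le_aux γ C hγ hC.le K hKb z t ht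
      _ ≤ C * Real.exp (a * t - (t/2)^γ) := by
          apply mul_le_mul_of_nonneg_left _ hC.le
          exact Real.exp_le_exp.mpr (by nlinarith [norm_nonneg z])
      _ ≤ C * (Real.exp (σ * a ^ (γ/(γ-1))) * g t) := by
          apply mul_le_mul_of_nonneg_left _ hC.le
          simpa [hσdef, hgdef, mul_comm] using exp_bound_aux γ hγ a t ha ht
      _ = C * Real.exp (σ * a ^ (γ/(γ-1))) * g t := by ring
  -- part 1: integrability
  have hint : ∀ z : ℂ, IntegrableOn
      (fun t : ℝ => K t * Complex.exp (Complex.I * z * t)) (Set.Ioi 0) := by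
    intro z
    apply Integrable.mono' ((hgint.const_mul (C * Real.exp (σ * ‖z‖ ^ (γ/(γ-1))))))
      (hFm z)
    filter_upwards [ae_restrict_mem measurableSet_Ioi] with t ht
    exact hbound ‖z‖ (norm_nonneg z) z le_rfl t (le_of_lt ht)
  refine ⟨hint, ?_, ?_⟩
  · -- part 2: differentiability
    intro z₀
    have key := hasDerivAt_integral_of_dominated_loc_of_deriv_le
      (F := fun (z : ℂ) (t : ℝ) => K t * Complex.exp (Complex.I * z * t))
      (F' := fun (z : ℂ) (t : ℝ) => K t * (Complex.exp (Complex.I * z * t) * (Complex.I * t)))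
      (x₀ := z₀) (μ := volume.restrict (Set.Ioi 0))
      (bound := fun t => C * Real.exp (σ * (‖z₀‖ + 2) ^ (γ/(γ-1))) * g t)
      (Metric.ball_mem_nhds z₀ one_pos) (Filter.Eventually.of_forall fun z => hFm z) (hint z₀)
      ((hKm.mul (((Complex.continuous_exp.comp
        (continuous_const.mul Complex.continuous_ofReal)).mul
        (continuous_const.mul Complex.continuous_ofReal)).measurable)).aestronglyMeasurable)
      ?_ ((hgint.const_mul _)) ?_
    · exact (key.2.const_add 1).differentiableAt
    · -- bound for the derivative
      filter_upwards [ae_restrict_mem measurableSet_Ioi] with t ht z hz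
      have ht' : (0:ℝ) ≤ t := le_of_lt ht
      have hznorm : ‖z‖ ≤ ‖z₀‖ + 1 := by
        have := mem_ball_iff_norm.mp hz
        calc ‖z‖ = ‖z₀ + (z - z₀)‖ := by ring_nf
          _ ≤ ‖z₀‖ + ‖z - z₀‖ := norm_add_le _ _
          _ ≤ ‖z₀‖ + 1 := by linarith
      have h1 : ‖K t * (Complex.exp (Complex.I * z * t) * (Complex.I * t))‖
          = ‖K t * Complex.exp (Complex.I * z * t)‖ * t := by
        simp [norm_mul, map_mul,
          abs_of_nonneg ht', mul_assoc]
      rw [h1]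
      calc ‖K t * Complex.exp (Complex.I * z * t)‖ * t
          ≤ (C * Real.exp (‖z‖ * t - (t/2)^γ)) * t := by
            apply mul_le_mul_of_nonneg_right (norm_F_le_aux γ C hγ hC.le K hKb z t ht') ht'
        _ = C * (t * Real.exp (‖z‖ * t - (t/2)^γ)) := by ring
        _ ≤ C * Real.exp ((‖z₀‖ + 2) * t - (t/2)^γ) := by
            apply mul_le_mul_of_nonneg_left _ hC.le
            calc t * Real.exp (‖z‖ * t - (t/2)^γ)
                ≤ Real.exp t * Real.exp (‖z‖ * t - (t/2)^γ) := by
                  apply mul_le_mul_of_nonneg_right _ (Real.exp_pos _).le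
                  linarith [Real.add_one_le_exp t]
              _ = Real.exp ((‖z‖ + 1) * t - (t/2)^γ) := by rw [← Real.exp_add]; ring_nf
              _ ≤ Real.exp ((‖z₀‖ + 2) * t - (t/2)^γ) := by
                  apply Real.exp_le_exp.mpr
                  nlinarith
        _ ≤ C * (Real.exp (σ * (‖z₀‖ + 2) ^ (γ/(γ-1))) * g t) := by
            apply mul_le_mul_of_nonneg_left _ hC.le
            simpa [hσdef, hgdef, mul_comm] using
              exp_bound_aux γ hγ (‖z₀‖ + 2) t (by positivity) ht'
        _ = C * Real.exp (σ * (‖z₀‖ + 2) ^ (γ/(γ-1))) * g t := by ring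
    · -- derivative
      filter_upwards with t z _
      have h1 : HasDerivAt (fun z : ℂ => Complex.I * z * (t:ℂ)) (Complex.I * t) z := by
        simpa using ((hasDerivAt_id z).const_mul Complex.I).mul_const (t:ℂ)
      exact (h1.cexp).const_mul (K t)
  · -- part 3: growth bound
    set I : ℝ := ∫ t in Set.Ioi (0:ℝ), g t with hIdef
    have hInn : 0 ≤ I := integral_nonneg fun t => (Real.exp_pos _).le
    refine ⟨1 + C * I, by positivity, σ, hσpos, fun z => ?_⟩
    have hnint : ‖∫ t in Set.Ioi (0:ℝ), K t * Complex.exp (Complex.I * z * t)‖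
        ≤ C * Real.exp (σ * ‖z‖ ^ (γ/(γ-1))) * I := by
      have := norm_integral_le_of_norm_le
        (f := fun t : ℝ => K t * Complex.exp (Complex.I * z * t))
        (g := fun t : ℝ => C * Real.exp (σ * ‖z‖ ^ (γ/(γ-1))) * g t)
        (hgint.const_mul _)
        (by filter_upwards [ae_restrict_mem measurableSet_Ioi] with t ht;
            exact hbound ‖z‖ (norm_nonneg z) z le_rfl t (le_of_lt ht))
      rwa [integral_const_mul] at this
    have hexp1 : (1:ℝ) ≤ Real.exp (σ * ‖z‖ ^ (γ/(γ-1))) := by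
      apply Real.one_le_exp
      positivity
    calc ‖1 + ∫ t in Set.Ioi (0:ℝ), K t * Complex.exp (Complex.I * z * t)‖
        ≤ ‖(1:ℂ)‖ + ‖∫ t in Set.Ioi (0:ℝ), K t * Complex.exp (Complex.I * z * t)‖ :=
          norm_add_le _ _
      _ ≤ 1 + C * Real.exp (σ * ‖z‖ ^ (γ/(γ-1))) * I := by
          rw [norm_one]; linarith
      _ ≤ (1 + C * I) * Real.exp (σ * ‖z‖ ^ (γ/(γ-1))) := by nlinarith
end
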